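/- arXiv:1703.06168 — 3 statements merged into one kernel-verified Lean document; each statement's English description precedes it below -/
import Mathlib

section
/- (Wall-crossing lemma, wall of type (C1).) Let g ≥ 1 be an integer and let (n, d) be invariants with |n| > 0 satisfying condition (C0) and the convention that d_i = 0 whenever n_i = 0. Let α ∈ Stability_n^d(g), and suppose for some 0 ≤ k < r with Σ_{i=0}^k n_i > 0 and Σ_{i=k+1}^r n_i > 0 equality holds in (C1): (Σ_{i=0}^k (d_i + α_i n_i)) / (Σ_{i=0}^k n_i) = μ_α(n, d). Define (n′, d′) by n′_i = n_i, d′_i = d_i for 0 ≤ i ≤ k and n′_i = 0, d′_i = 0 for k < i ≤ r, and set (n″, d″) := (n − n′, d − d′). Then (n′, d′) and (n″, d″) each satisfy (C0), and α satisfies (C1), (C2), (C3) with respect to each of (n′, d′) and (n″, d″); in particular α ∈ Stability_{n′}^{d′}(g) and α ∈ Stability_{n″}^{d″}(g). -/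
open Finset

/-- The α-slope of chain invariants `(n, d)` of length `r`. -/
noncomputable def mu (r : ℕ) (n : ℕ → ℕ) (d : ℕ → ℤ) (α : ℕ → ℝ) : ℝ :=
  ((∑ i ∈ range (r + 1), (d i : ℝ)) + ∑ i ∈ range (r + 1), α i * (n i : ℝ)) /
    ∑ i ∈ range (r + 1), (n i : ℝ)

/-- Condition (C0): whenever `n i = n (i-1)` we have `d i ≤ d (i-1)`. -/
def CondC0 (r : ℕ) (n : ℕ → ℕ) (d : ℕ → ℤ) : Prop :=
  ∀ i, 1 ≤ i → i ≤ r → n i = n (i - 1) → d i ≤ d (i - 1)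

/-- Condition (C1): the slopes of the truncated subchains are at most `μ_α(n,d)`. -/
def CondC1 (r : ℕ) (n : ℕ → ℕ) (d : ℕ → ℤ) (α : ℕ → ℝ) : Prop :=
  ∀ k, k < r → 0 < ∑ i ∈ range (k + 1), (n i : ℝ) →
    (∑ i ∈ range (k + 1), ((d i : ℝ) + α i * n i)) / (∑ i ∈ range (k + 1), (n i : ℝ)) ≤
      mu r n d α

/-- Condition (C2): the slopes of the standard subchains of type 2 are at most
`μ_α(n,d)`. -/
def CondC2 (r : ℕ) (n : ℕ → ℕ) (d : ℕ → ℤ) (α : ℕ → ℝ) : Prop :=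
  ∀ k j, k < j → j ≤ r → (∀ i ∈ Icc k (j - 1), n j < n i) →
    0 < (∑ i ∈ range (r + 1) \ Icc k j, (n i : ℝ)) + ((j : ℝ) - k + 1) * n j →
    ((∑ i ∈ range (r + 1) \ Icc k j, ((d i : ℝ) + α i * n i)) +
        ((j : ℝ) - k + 1) * d j + (∑ i ∈ Icc k j, α i) * n j) /
      ((∑ i ∈ range (r + 1) \ Icc k j, (n i : ℝ)) + ((j : ℝ) - k + 1) * n j) ≤
      mu r n d α

/-- Condition (C3): the slopes of the standard subchains of type 4 are at most
`μ_α(n,d)`. -/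
def CondC3 (r : ℕ) (n : ℕ → ℕ) (d : ℕ → ℤ) (α : ℕ → ℝ) : Prop :=
  ∀ k j, k < j → j ≤ r → (∀ i ∈ Icc (k + 1) j, n k < n i) →
    (∑ i ∈ Icc (k + 1) j, ((d i : ℝ) - d k + α i * ((n i : ℝ) - n k))) /
        (∑ i ∈ Icc (k + 1) j, ((n i : ℝ) - n k)) ≤ mu r n d α

/-- The stability region `Stability_n^d(g)`: normalized parameters `α` with
`α_0 = 0`, `α_i - α_{i-1} > 2g - 2`, satisfying conditions (C1), (C2), (C3). -/
def StabilityRegion (r : ℕ) (n : ℕ → ℕ) (d : ℕ → ℤ) (g : ℤ) : Set (ℕ → ℝ) :=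
  {α | α 0 = 0 ∧ (∀ i, 1 ≤ i → i ≤ r → α i - α (i - 1) > 2 * (g : ℝ) - 2) ∧
    CondC1 r n d α ∧ CondC2 r n d α ∧ CondC3 r n d α}


section Aux

lemma sum_ite_le_eq (r k : ℕ) (f : ℕ → ℝ) (hk : k ≤ r) :
    ∑ i ∈ range (r+1), (if i ≤ k then f i else 0) = ∑ i ∈ range (k+1), f i := by
  rw [← Finset.sum_filter]
  congr 1; ext i; simp only [mem_filter, mem_range]; omega

lemma sum_ite_gt_eq (r k : ℕ) (f : ℕ → ℝ) :
    ∑ i ∈ range (r+1), (if i ≤ k then 0 else f i) = ∑ i ∈ Icc (k+1) r, f i := by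
  rw [Finset.sum_ite, Finset.sum_const_zero, zero_add]
  congr 1; ext i; simp only [mem_filter, mem_range, mem_Icc]; omega

lemma sum_split (r k : ℕ) (hk : k ≤ r) (f : ℕ → ℝ) :
    ∑ i ∈ range (r+1), f i = ∑ i ∈ range (k+1), f i + ∑ i ∈ Icc (k+1) r, f i := by
  rw [range_eq_Ico, range_eq_Ico, ← Finset.Ico_add_one_right_eq_Icc]
  exact (Finset.sum_Ico_consecutive f (by omega : 0 ≤ k + 1) (by omega : k + 1 ≤ r + 1)).symm

lemma sum_ite_split (s : Finset ℕ) (k : ℕ) (f : ℕ → ℝ) :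
    ∑ i ∈ s, f i = ∑ i ∈ s, (if i ≤ k then f i else 0) + ∑ i ∈ s, (if i ≤ k then 0 else f i) := by
  rw [← Finset.sum_add_distrib]; exact Finset.sum_congr rfl fun i _ => by split <;> simp

lemma sum_ite_le_filter (s : Finset ℕ) (k : ℕ) (f : ℕ → ℝ) :
    ∑ i ∈ s, (if i ≤ k then f i else 0) = ∑ i ∈ s.filter (fun i => i ≤ k), f i :=
  (Finset.sum_filter _ _).symm

lemma sum_ite_gt_filter (s : Finset ℕ) (k : ℕ) (f : ℕ → ℝ) :
    ∑ i ∈ s, (if i ≤ k then 0 else f i) = ∑ i ∈ s.filter (fun i => ¬ i ≤ k), f i := by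
  rw [Finset.sum_ite, Finset.sum_const_zero, zero_add]

end Aux

/-- Wall-crossing lemma, wall of type (C1): if `α ∈ Stability_n^d(g)` lies on a wall
given by equality in (C1) at index `k`, then the invariants of the corresponding
standard subchain and quotient each satisfy (C0), and `α` lies in their stability
regions. -/
theorem wall_crossing_C1 (r : ℕ) (n : ℕ → ℕ) (d : ℕ → ℤ) (α : ℕ → ℝ) (g : ℤ)
    (hg : 1 ≤ g)
    (hn : 0 < ∑ i ∈ range (r + 1), n i)
    (hC0 : CondC0 r n d)
    (hconv : ∀ i, i ≤ r → n i = 0 → d i = 0)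
    (hα : α ∈ StabilityRegion r n d g)
    (k : ℕ) (hk : k < r)
    (h1 : 0 < ∑ i ∈ range (k + 1), n i)
    (h2 : 0 < ∑ i ∈ Icc (k + 1) r, n i)
    (heq : (∑ i ∈ range (k + 1), ((d i : ℝ) + α i * n i)) /
        (∑ i ∈ range (k + 1), (n i : ℝ)) = mu r n d α) :
    CondC0 r (fun i => if i ≤ k then n i else 0) (fun i => if i ≤ k then d i else 0) ∧
    CondC0 r (fun i => if i ≤ k then 0 else n i) (fun i => if i ≤ k then 0 else d i) ∧
    α ∈ StabilityRegion r (fun i => if i ≤ k then n i else 0)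
        (fun i => if i ≤ k then d i else 0) g ∧
    α ∈ StabilityRegion r (fun i => if i ≤ k then 0 else n i)
        (fun i => if i ≤ k then 0 else d i) g := by
  obtain ⟨hα0, hgap, hC1, hC2, hC3⟩ := hα
  have hkr : k ≤ r := hk.le
  have hnn : ∀ s : Finset ℕ, (0:ℝ) ≤ ∑ i ∈ s, (n i : ℝ) :=
    fun s => Finset.sum_nonneg fun i _ => by positivity
  have hH : (0:ℝ) < ∑ i ∈ range (k+1), (n i : ℝ) := by exact_mod_cast h1
  have hT : (0:ℝ) < ∑ i ∈ Icc (k+1) r, (n i : ℝ) := by exact_mod_cast h2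
  have hS : (0:ℝ) < ∑ i ∈ range (r+1), (n i : ℝ) := by
    rw [sum_split r k hkr]; linarith
  set μ := mu r n d α with hμdef
  have hSd : ∑ i ∈ range (r+1), ((d i:ℝ) + α i * n i)
      = μ * ∑ i ∈ range (r+1), (n i : ℝ) := by
    rw [Finset.sum_add_distrib, hμdef, mu, div_mul_cancel₀ _ hS.ne']
  have hHd : ∑ i ∈ range (k+1), ((d i:ℝ) + α i * n i)
      = μ * ∑ i ∈ range (k+1), (n i : ℝ) := by
    rw [div_eq_iff hH.ne'] at heq; exact heq
  have hTd : ∑ i ∈ Icc (k+1) r, ((d i:ℝ) + α i * n i)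
      = μ * ∑ i ∈ Icc (k+1) r, (n i : ℝ) := by
    have e1 := sum_split r k hkr (fun i => (d i:ℝ) + α i * n i)
    have e2 := sum_split r k hkr (fun i => (n i : ℝ))
    rw [e1, e2, mul_add] at hSd
    linarith
  -- the tail inequality
  have htail : ∀ b, k < b → b ≤ r →
      ∑ i ∈ Icc (k+1) b, ((d i:ℝ) + α i * n i) ≤ μ * ∑ i ∈ Icc (k+1) b, (n i : ℝ) := by
    intro b hb hbr
    rcases eq_or_lt_of_le hbr with rfl | hlt
    · exact le_of_eq hTd
    · have e1 := sum_split b k hb.le (fun i => (d i:ℝ) + α i * n i)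
      have e2 := sum_split b k hb.le (fun i => (n i : ℝ))
      have hpos : (0:ℝ) < ∑ i ∈ range (b+1), (n i : ℝ) := by
        rw [e2]; have := hnn (Icc (k+1) b); linarith
      have h := hC1 b hlt hpos
      rw [div_le_iff₀ hpos] at h
      rw [e1, e2, mul_add] at h
      linarith
  -- the slopes of the two pieces
  have hmu1 : mu r (fun i => if i ≤ k then n i else 0) (fun i => if i ≤ k then d i else 0) α
      = μ := by
    rw [mu]
    have e1 : ∑ i ∈ range (r+1), ((if i ≤ k then d i else 0 : ℤ) : ℝ)
        = ∑ i ∈ range (k+1), (d i : ℝ) := by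
      simp only [apply_ite (fun x : ℤ => (x:ℝ)), Int.cast_zero]
      exact sum_ite_le_eq r k _ hkr
    have e2 : ∑ i ∈ range (r+1), α i * ((if i ≤ k then n i else 0 : ℕ) : ℝ)
        = ∑ i ∈ range (k+1), α i * n i := by
      simp only [apply_ite (fun x : ℕ => (x:ℝ)), Nat.cast_zero, mul_ite, mul_zero]
      exact sum_ite_le_eq r k _ hkr
    have e3 : ∑ i ∈ range (r+1), ((if i ≤ k then n i else 0 : ℕ) : ℝ)
        = ∑ i ∈ range (k+1), (n i : ℝ) := by
      simp only [apply_ite (fun x : ℕ => (x:ℝ)), Nat.cast_zero]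
      exact sum_ite_le_eq r k _ hkr
    rw [e1, e2, e3, ← Finset.sum_add_distrib, hHd, mul_div_cancel_right₀ _ hH.ne']
  have hmu2 : mu r (fun i => if i ≤ k then 0 else n i) (fun i => if i ≤ k then 0 else d i) α
      = μ := by
    rw [mu]
    have e1 : ∑ i ∈ range (r+1), ((if i ≤ k then 0 else d i : ℤ) : ℝ)
        = ∑ i ∈ Icc (k+1) r, (d i : ℝ) := by
      simp only [apply_ite (fun x : ℤ => (x:ℝ)), Int.cast_zero]
      exact sum_ite_gt_eq r k _
    have e2 : ∑ i ∈ range (r+1), α i * ((if i ≤ k then 0 else n i : ℕ) : ℝ)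
        = ∑ i ∈ Icc (k+1) r, α i * n i := by
      simp only [apply_ite (fun x : ℕ => (x:ℝ)), Nat.cast_zero, mul_ite, mul_zero]
      exact sum_ite_gt_eq r k _
    have e3 : ∑ i ∈ range (r+1), ((if i ≤ k then 0 else n i : ℕ) : ℝ)
        = ∑ i ∈ Icc (k+1) r, (n i : ℝ) := by
      simp only [apply_ite (fun x : ℕ => (x:ℝ)), Nat.cast_zero]
      exact sum_ite_gt_eq r k _
    rw [e1, e2, e3, ← Finset.sum_add_distrib, hTd, mul_div_cancel_right₀ _ hT.ne']
  refine ⟨?_, ?_, ⟨hα0, hgap, ?_, ?_, ?_⟩, ⟨hα0, hgap, ?_, ?_, ?_⟩⟩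
  · -- C0 for (n', d')
    intro i h1i hir hni
    simp only at hni ⊢
    by_cases hik : i ≤ k
    · have hi1 : i - 1 ≤ k := by omega
      rw [if_pos hik, if_pos hi1] at hni ⊢
      exact hC0 i h1i hir hni
    · by_cases hi1k : i - 1 ≤ k
      · rw [if_neg hik, if_pos hi1k] at hni ⊢
        rw [hconv (i-1) (by omega) hni.symm]
      · rw [if_neg hik, if_neg hi1k]
  · -- C0 for (n'', d'')
    intro i h1i hir hni
    simp only at hni ⊢
    by_cases hik : i ≤ k
    · have hi1 : i - 1 ≤ k := by omega
      rw [if_pos hik, if_pos hi1]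
    · by_cases hi1k : i - 1 ≤ k
      · rw [if_neg hik, if_pos hi1k] at hni ⊢
        rw [hconv i hir hni]
      · rw [if_neg hik, if_neg hi1k] at hni ⊢
        exact hC0 i h1i hir hni
  · -- C1 for (n', d')
    intro a ha hpos
    rw [hmu1]
    by_cases hak : a ≤ k
    · have en : ∑ i ∈ range (a+1), ((if i ≤ k then n i else 0 : ℕ) : ℝ)
          = ∑ i ∈ range (a+1), (n i : ℝ) :=
        Finset.sum_congr rfl fun i hi => by
          rw [if_pos (by simp only [mem_range] at hi; omega : i ≤ k)]
      have ed : ∑ i ∈ range (a+1), (((if i ≤ k then d i else 0 : ℤ) : ℝ)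
            + α i * ((if i ≤ k then n i else 0 : ℕ) : ℝ))
          = ∑ i ∈ range (a+1), ((d i : ℝ) + α i * n i) :=
        Finset.sum_congr rfl fun i hi => by
          have : i ≤ k := by simp only [mem_range] at hi; omega
          rw [if_pos this, if_pos this]
      rw [en] at hpos
      rw [en, ed]
      exact hC1 a ha hpos
    · have hka : k ≤ a := by omega
      have en : ∑ i ∈ range (a+1), ((if i ≤ k then n i else 0 : ℕ) : ℝ)
          = ∑ i ∈ range (k+1), (n i : ℝ) := by
        simp only [apply_ite (fun x : ℕ => (x:ℝ)), Nat.cast_zero]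
        exact sum_ite_le_eq a k _ hka
      have ed : ∑ i ∈ range (a+1), (((if i ≤ k then d i else 0 : ℤ) : ℝ)
            + α i * ((if i ≤ k then n i else 0 : ℕ) : ℝ))
          = ∑ i ∈ range (k+1), ((d i : ℝ) + α i * n i) := by
        simp only [apply_ite (fun x : ℤ => (x:ℝ)), apply_ite (fun x : ℕ => (x:ℝ)),
          Int.cast_zero, Nat.cast_zero, mul_ite, mul_zero, ite_add_ite, add_zero]
        exact sum_ite_le_eq a k _ hka
      rw [en, ed, hHd, mul_div_cancel_right₀ _ hH.ne']
  · -- C2 for (n', d')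
    intro a b hab hbr hlt hpos
    simp only at hlt hpos ⊢
    rw [hmu1]
    by_cases hbk : b ≤ k
    · -- the whole subchain interval lies in [0, k]
      have hlt' : ∀ i ∈ Icc a (b-1), n b < n i := fun i hi => by
        have h := hlt i hi
        have hik : i ≤ k := by simp only [mem_Icc] at hi; omega
        rw [if_pos hbk, if_pos hik] at h
        exact h
      have hfn : ∑ i ∈ range (r+1) \ Icc a b, (if i ≤ k then 0 else (n i : ℝ))
          = ∑ i ∈ Icc (k+1) r, (n i : ℝ) := by
        rw [sum_ite_gt_filter]
        congr 1; ext i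
        simp only [mem_filter, mem_sdiff, mem_range, mem_Icc]
        omega
      have hfd : ∑ i ∈ range (r+1) \ Icc a b,
            (if i ≤ k then 0 else ((d i : ℝ) + α i * n i))
          = ∑ i ∈ Icc (k+1) r, ((d i : ℝ) + α i * n i) := by
        rw [sum_ite_gt_filter]
        congr 1; ext i
        simp only [mem_filter, mem_sdiff, mem_range, mem_Icc]
        omega
      have esn : ∑ i ∈ range (r+1) \ Icc a b, ((if i ≤ k then n i else 0 : ℕ) : ℝ)
          = ∑ i ∈ range (r+1) \ Icc a b, (n i : ℝ) - ∑ i ∈ Icc (k+1) r, (n i : ℝ) := by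
        have hs := sum_ite_split (range (r+1) \ Icc a b) k (fun i => (n i : ℝ))
        simp only [apply_ite (fun x : ℕ => (x:ℝ)), Nat.cast_zero]
        linarith [hs, hfn]
      have esd : ∑ i ∈ range (r+1) \ Icc a b, (((if i ≤ k then d i else 0 : ℤ) : ℝ)
            + α i * ((if i ≤ k then n i else 0 : ℕ) : ℝ))
          = ∑ i ∈ range (r+1) \ Icc a b, ((d i : ℝ) + α i * n i)
            - ∑ i ∈ Icc (k+1) r, ((d i : ℝ) + α i * n i) := by
        have hs := sum_ite_split (range (r+1) \ Icc a b) k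
          (fun i => (d i : ℝ) + α i * n i)
        simp only [apply_ite (fun x : ℤ => (x:ℝ)), apply_ite (fun x : ℕ => (x:ℝ)),
          Int.cast_zero, Nat.cast_zero, mul_ite, mul_zero, ite_add_ite, add_zero, zero_add]
        linarith [hs, hfd]
      rw [esn, if_pos hbk] at hpos
      rw [esn, esd]
      simp only [if_pos hbk]
      have hBpos : (0:ℝ) < (∑ i ∈ range (r+1) \ Icc a b, (n i : ℝ))
          + ((b:ℝ) - a + 1) * n b := by linarith
      have horig := hC2 a b hab hbr hlt' hBpos
      rw [div_le_iff₀ hBpos] at horig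
      rw [div_le_iff₀ hpos]
      have hring : μ * ((∑ i ∈ range (r+1) \ Icc a b, (n i : ℝ))
            - ∑ i ∈ Icc (k+1) r, (n i : ℝ) + ((b:ℝ) - a + 1) * n b)
          = μ * ((∑ i ∈ range (r+1) \ Icc a b, (n i : ℝ)) + ((b:ℝ) - a + 1) * n b)
            - μ * ∑ i ∈ Icc (k+1) r, (n i : ℝ) := by ring
      linarith [hTd, hring, horig]
    · -- here necessarily b = k + 1, and the subchain is a truncation
      have hb : b = k + 1 := by
        have h := hlt (b-1) (by simp only [mem_Icc]; omega)
        rw [if_neg hbk] at h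
        by_contra hne
        rw [if_neg (by omega : ¬ b - 1 ≤ k)] at h
        exact absurd h (Nat.not_lt_zero _)
      subst hb
      have hak : a ≤ k := by omega
      have hkk : ¬ k + 1 ≤ k := by omega
      have hfn : ∑ i ∈ range (r+1) \ Icc a (k+1), (if i ≤ k then (n i : ℝ) else 0)
          = ∑ i ∈ range a, (n i : ℝ) := by
        rw [sum_ite_le_filter]
        congr 1; ext i
        simp only [mem_filter, mem_sdiff, mem_range, mem_Icc]
        omega
      have esn : ∑ i ∈ range (r+1) \ Icc a (k+1), ((if i ≤ k then n i else 0 : ℕ) : ℝ)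
          = ∑ i ∈ range a, (n i : ℝ) := by
        simp only [apply_ite (fun x : ℕ => (x:ℝ)), Nat.cast_zero]
        exact hfn
      have esd : ∑ i ∈ range (r+1) \ Icc a (k+1), (((if i ≤ k then d i else 0 : ℤ) : ℝ)
            + α i * ((if i ≤ k then n i else 0 : ℕ) : ℝ))
          = ∑ i ∈ range a, ((d i : ℝ) + α i * n i) := by
        simp only [apply_ite (fun x : ℤ => (x:ℝ)), apply_ite (fun x : ℕ => (x:ℝ)),
          Int.cast_zero, Nat.cast_zero, mul_ite, mul_zero, ite_add_ite, add_zero, zero_add]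
        rw [sum_ite_le_filter]
        congr 1; ext i
        simp only [mem_filter, mem_sdiff, mem_range, mem_Icc]
        omega
      rw [esn, if_neg hkk, Nat.cast_zero, mul_zero, add_zero] at hpos
      rw [esn, esd]
      simp only [if_neg hkk, Nat.cast_zero, Int.cast_zero, mul_zero, add_zero]
      have ha0 : a ≠ 0 := by
        rintro rfl
        simp only [range_zero, Finset.sum_empty] at hpos
        exact lt_irrefl _ hpos
      obtain ⟨c, rfl⟩ : ∃ c, a = c + 1 := ⟨a - 1, by omega⟩
      exact hC1 c (by omega) hpos
  · -- C3 for (n', d')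
    intro a b hab hbr hlt
    rw [hmu1]
    have hbk : b ≤ k := by
      by_contra h
      have h2' := hlt b (by simp only [mem_Icc]; omega)
      simp only [if_neg h] at h2'
      exact absurd h2' (Nat.not_lt_zero _)
    have hak : a ≤ k := by omega
    have hlt' : ∀ i ∈ Icc (a+1) b, n a < n i := fun i hi => by
      have h := hlt i hi
      have hik : i ≤ k := by simp only [mem_Icc] at hi; omega
      simp only [if_pos hak, if_pos hik] at h
      exact h
    have enum : ∑ i ∈ Icc (a+1) b, (((if i ≤ k then d i else 0 : ℤ) : ℝ)
          - ((if a ≤ k then d a else 0 : ℤ) : ℝ)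
          + α i * (((if i ≤ k then n i else 0 : ℕ) : ℝ)
            - ((if a ≤ k then n a else 0 : ℕ) : ℝ)))
        = ∑ i ∈ Icc (a+1) b, ((d i : ℝ) - d a + α i * ((n i : ℝ) - n a)) :=
      Finset.sum_congr rfl fun i hi => by
        have hik : i ≤ k := by simp only [mem_Icc] at hi; omega
        rw [if_pos hak, if_pos hak, if_pos hik, if_pos hik]
    have eden : ∑ i ∈ Icc (a+1) b, (((if i ≤ k then n i else 0 : ℕ) : ℝ)
          - ((if a ≤ k then n a else 0 : ℕ) : ℝ))
        = ∑ i ∈ Icc (a+1) b, ((n i : ℝ) - n a) :=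
      Finset.sum_congr rfl fun i hi => by
        have hik : i ≤ k := by simp only [mem_Icc] at hi; omega
        rw [if_pos hak, if_pos hik]
    rw [enum, eden]
    exact hC3 a b hab hbr hlt'
  · -- C1 for (n'', d'')
    intro a ha hpos
    rw [hmu2]
    have hak : k < a := by
      by_contra h
      push_neg at h
      have : ∑ i ∈ range (a+1), ((if i ≤ k then 0 else n i : ℕ) : ℝ) = 0 :=
        Finset.sum_eq_zero fun i hi => by
          rw [if_pos (by simp only [mem_range] at hi; omega : i ≤ k)]
          simp
      rw [this] at hpos
      exact lt_irrefl _ hpos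
    have en : ∑ i ∈ range (a+1), ((if i ≤ k then 0 else n i : ℕ) : ℝ)
        = ∑ i ∈ Icc (k+1) a, (n i : ℝ) := by
      simp only [apply_ite (fun x : ℕ => (x:ℝ)), Nat.cast_zero]
      exact sum_ite_gt_eq a k _
    have ed : ∑ i ∈ range (a+1), (((if i ≤ k then 0 else d i : ℤ) : ℝ)
          + α i * ((if i ≤ k then 0 else n i : ℕ) : ℝ))
        = ∑ i ∈ Icc (k+1) a, ((d i : ℝ) + α i * n i) := by
      simp only [apply_ite (fun x : ℤ => (x:ℝ)), apply_ite (fun x : ℕ => (x:ℝ)),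
        Int.cast_zero, Nat.cast_zero, mul_ite, mul_zero, ite_add_ite, add_zero, zero_add]
      exact sum_ite_gt_eq a k _
    rw [en] at hpos
    rw [en, ed, div_le_iff₀ hpos]
    exact htail a hak ha.le
  · -- C2 for (n'', d'')
    intro a b hab hbr hlt hpos
    simp only at hlt hpos ⊢
    rw [hmu2]
    have hak : k < a := by
      by_contra h
      push_neg at h
      have h' := hlt a (by simp only [mem_Icc]; omega)
      rw [if_pos h] at h'
      exact absurd h' (Nat.not_lt_zero _)
    have hbk : ¬ b ≤ k := by omega
    have hlt' : ∀ i ∈ Icc a (b-1), n b < n i := fun i hi => by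
      have h := hlt i hi
      have hik : ¬ i ≤ k := by simp only [mem_Icc] at hi; omega
      rw [if_neg hbk, if_neg hik] at h
      exact h
    have hfn : ∑ i ∈ range (r+1) \ Icc a b, (if i ≤ k then (n i : ℝ) else 0)
        = ∑ i ∈ range (k+1), (n i : ℝ) := by
      rw [sum_ite_le_filter]
      congr 1; ext i
      simp only [mem_filter, mem_sdiff, mem_range, mem_Icc]
      omega
    have hfd : ∑ i ∈ range (r+1) \ Icc a b, (if i ≤ k then ((d i : ℝ) + α i * n i) else 0)
        = ∑ i ∈ range (k+1), ((d i : ℝ) + α i * n i) := by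
      rw [sum_ite_le_filter]
      congr 1; ext i
      simp only [mem_filter, mem_sdiff, mem_range, mem_Icc]
      omega
    have esn : ∑ i ∈ range (r+1) \ Icc a b, ((if i ≤ k then 0 else n i : ℕ) : ℝ)
        = ∑ i ∈ range (r+1) \ Icc a b, (n i : ℝ) - ∑ i ∈ range (k+1), (n i : ℝ) := by
      have hs := sum_ite_split (range (r+1) \ Icc a b) k (fun i => (n i : ℝ))
      simp only [apply_ite (fun x : ℕ => (x:ℝ)), Nat.cast_zero]
      linarith [hs, hfn]
    have esd : ∑ i ∈ range (r+1) \ Icc a b, (((if i ≤ k then 0 else d i : ℤ) : ℝ)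
          + α i * ((if i ≤ k then 0 else n i : ℕ) : ℝ))
        = ∑ i ∈ range (r+1) \ Icc a b, ((d i : ℝ) + α i * n i)
          - ∑ i ∈ range (k+1), ((d i : ℝ) + α i * n i) := by
      have hs := sum_ite_split (range (r+1) \ Icc a b) k
        (fun i => (d i : ℝ) + α i * n i)
      simp only [apply_ite (fun x : ℤ => (x:ℝ)), apply_ite (fun x : ℕ => (x:ℝ)),
        Int.cast_zero, Nat.cast_zero, mul_ite, mul_zero, ite_add_ite, add_zero, zero_add]
      linarith [hs, hfd]
    rw [esn, if_neg hbk] at hpos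
    rw [esn, esd]
    simp only [if_neg hbk]
    have hBpos : (0:ℝ) < (∑ i ∈ range (r+1) \ Icc a b, (n i : ℝ))
        + ((b:ℝ) - a + 1) * n b := by linarith
    have horig := hC2 a b hab hbr hlt' hBpos
    rw [div_le_iff₀ hBpos] at horig
    rw [div_le_iff₀ hpos]
    have hring : μ * ((∑ i ∈ range (r+1) \ Icc a b, (n i : ℝ))
          - ∑ i ∈ range (k+1), (n i : ℝ) + ((b:ℝ) - a + 1) * n b)
        = μ * ((∑ i ∈ range (r+1) \ Icc a b, (n i : ℝ)) + ((b:ℝ) - a + 1) * n b)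
          - μ * ∑ i ∈ range (k+1), (n i : ℝ) := by ring
    linarith [hHd, hring, horig]
  · -- C3 for (n'', d'')
    intro a b hab hbr hlt
    rw [hmu2]
    by_cases hak : a ≤ k
    · have hk1 : ∀ i ∈ Icc (a+1) b, k < i := by
        intro i hi
        by_contra h
        push_neg at h
        have h' := hlt i hi
        simp only [if_pos h] at h'
        exact absurd h' (Nat.not_lt_zero _)
      have ha : a = k := by
        have := hk1 (a+1) (by simp only [mem_Icc]; omega)
        omega
      subst ha
      have hnpos : ∀ i ∈ Icc (a+1) b, 0 < n i := by
        intro i hi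
        have h' := hlt i hi
        have hik : ¬ i ≤ a := by simp only [mem_Icc] at hi; omega
        simp only [if_pos (le_refl a), if_neg hik] at h'
        exact h'
      have enum : ∑ i ∈ Icc (a+1) b, (((if i ≤ a then 0 else d i : ℤ) : ℝ)
            - ((if a ≤ a then 0 else d a : ℤ) : ℝ)
            + α i * (((if i ≤ a then 0 else n i : ℕ) : ℝ)
              - ((if a ≤ a then 0 else n a : ℕ) : ℝ)))
          = ∑ i ∈ Icc (a+1) b, ((d i : ℝ) + α i * n i) :=
        Finset.sum_congr rfl fun i hi => by
          have hik : ¬ i ≤ a := by simp only [mem_Icc] at hi; omega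
          rw [if_pos (le_refl a), if_pos (le_refl a), if_neg hik, if_neg hik]
          push_cast
          ring
      have eden : ∑ i ∈ Icc (a+1) b, (((if i ≤ a then 0 else n i : ℕ) : ℝ)
            - ((if a ≤ a then 0 else n a : ℕ) : ℝ))
          = ∑ i ∈ Icc (a+1) b, (n i : ℝ) :=
        Finset.sum_congr rfl fun i hi => by
          have hik : ¬ i ≤ a := by simp only [mem_Icc] at hi; omega
          rw [if_pos (le_refl a), if_neg hik]
          push_cast
          ring
      have hdenpos : (0:ℝ) < ∑ i ∈ Icc (a+1) b, (n i : ℝ) := by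
        refine Finset.sum_pos (fun i hi => ?_) ⟨a+1, by simp only [mem_Icc]; omega⟩
        exact_mod_cast hnpos i hi
      rw [enum, eden, div_le_iff₀ hdenpos]
      exact htail b hab hbr
    · have hlt' : ∀ i ∈ Icc (a+1) b, n a < n i := fun i hi => by
        have h := hlt i hi
        have hik : ¬ i ≤ k := by simp only [mem_Icc] at hi; omega
        simp only [if_neg hak, if_neg hik] at h
        exact h
      have enum : ∑ i ∈ Icc (a+1) b, (((if i ≤ k then 0 else d i : ℤ) : ℝ)
            - ((if a ≤ k then 0 else d a : ℤ) : ℝ)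
            + α i * (((if i ≤ k then 0 else n i : ℕ) : ℝ)
              - ((if a ≤ k then 0 else n a : ℕ) : ℝ)))
          = ∑ i ∈ Icc (a+1) b, ((d i : ℝ) - d a + α i * ((n i : ℝ) - n a)) :=
        Finset.sum_congr rfl fun i hi => by
          have hik : ¬ i ≤ k := by simp only [mem_Icc] at hi; omega
          rw [if_neg hak, if_neg hak, if_neg hik, if_neg hik]
      have eden : ∑ i ∈ Icc (a+1) b, (((if i ≤ k then 0 else n i : ℕ) : ℝ)
            - ((if a ≤ k then 0 else n a : ℕ) : ℝ))
          = ∑ i ∈ Icc (a+1) b, ((n i : ℝ) - n a) :=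
        Finset.sum_congr rfl fun i hi => by
          have hik : ¬ i ≤ k := by simp only [mem_Icc] at hi; omega
          rw [if_neg hak, if_neg hik]
      rw [enum, eden]
      exact hC3 a b hab hbr hlt'
end

section
/- (Wall-crossing lemma, wall of type (C3).) Let g ≥ 1 be an integer and let (n, d) be invariants with |n| > 0 satisfying condition (C0) and the convention that d_i = 0 whenever n_i = 0. Let α ∈ Stability_n^d(g), and suppose for some 0 ≤ k < j ≤ r with n_k < min{n_{k+1}, …, n_j} equality holds in (C3): (Σ_{i=k+1}^j (d_i − d_k + α_i(n_i − n_k))) / (Σ_{i=k+1}^j (n_i − n_k)) = μ_α(n, d). Define the standard-quotient invariants (n″, d″) by n″_i = n_i, d″_i = d_i for i ∉ [k,j] and n″_i = n_k, d″_i = d_k for i ∈ [k,j]; assume |n″| > 0, and set (n′, d′) := (n − n″, d − d″). Then (n′, d′) and (n″, d″) each satisfy (C0), and α satisfies (C1), (C2), (C3) with respect to each of (n′, d′) and (n″, d″); in particular α ∈ Stability_{n′}^{d′}(g) and α ∈ Stability_{n″}^{d″}(g). -/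
open Finset

lemma wc_split (F : ℕ → ℝ) {a b c : ℕ} (h1 : a ≤ b) (h2 : b ≤ c) :
    ∑ i ∈ Ico a c, F i = ∑ i ∈ Ico a b, F i + ∑ i ∈ Ico b c, F i :=
  (Finset.sum_Ico_consecutive _ h1 h2).symm

lemma wc_split_range (F : ℕ → ℝ) {a c : ℕ} (h : a ≤ c) :
    ∑ i ∈ range c, F i = ∑ i ∈ range a, F i + ∑ i ∈ Ico a c, F i := by
  rw [Finset.range_eq_Ico, Finset.range_eq_Ico]; exact wc_split F (Nat.zero_le a) h

lemma wc_sdiff (F : ℕ → ℝ) {a b r : ℕ} (ha : a ≤ b) (hb : b ≤ r) :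
    ∑ i ∈ range (r+1) \ Icc a b, F i
      = ∑ i ∈ Ico 0 a, F i + ∑ i ∈ Ico (b+1) (r+1), F i := by
  have hsub : Icc a b ⊆ range (r+1) := by
    intro i hi
    simp only [mem_Icc, mem_range] at *
    omega
  have h1 : ∑ i ∈ range (r+1) \ Icc a b, F i
      = ∑ i ∈ range (r+1), F i - ∑ i ∈ Icc a b, F i :=
    Finset.sum_sdiff_eq_sub hsub
  rw [h1, Finset.range_eq_Ico, wc_split F (Nat.zero_le a) (by omega : a ≤ r+1),
    wc_split F (by omega : a ≤ b+1) (by omega : b+1 ≤ r+1), ← Finset.Ico_add_one_right_eq_Icc]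
  ring

lemma wc_blocksum (F : ℕ → ℝ) {a b r : ℕ} (hab : a ≤ b) (hbr : b ≤ r)
    (h0 : ∀ i, i ≤ r → i < a ∨ b < i → F i = 0) :
    ∑ i ∈ range (r+1), F i = ∑ i ∈ Icc a b, F i := by
  rw [Finset.range_eq_Ico, wc_split F (Nat.zero_le a) (by omega : a ≤ r+1),
      wc_split F (by omega : a ≤ b+1) (by omega : b+1 ≤ r+1), ← Finset.Ico_add_one_right_eq_Icc]
  have z1 : ∑ i ∈ Ico 0 a, F i = 0 :=
    Finset.sum_eq_zero fun i hi => by rw [mem_Ico] at hi; exact h0 i (by omega) (Or.inl hi.2)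
  have z2 : ∑ i ∈ Ico (b+1) (r+1), F i = 0 :=
    Finset.sum_eq_zero fun i hi => by rw [mem_Ico] at hi; exact h0 i (by omega) (Or.inr (by omega))
  rw [z1, z2]; ring

lemma wc_Icc_bot (F : ℕ → ℝ) {a b : ℕ} (h : a ≤ b) :
    ∑ i ∈ Icc a b, F i = F a + ∑ i ∈ Icc (a+1) b, F i := by
  rw [← Finset.Ico_add_one_right_eq_Icc, ← Finset.Ico_add_one_right_eq_Icc]
  exact Finset.sum_eq_sum_Ico_succ_bot (by omega) F

lemma wc_trick (G : ℕ → ℝ) (a b tt : ℕ) (P0 : ℝ)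
    (hmono : ∀ i i', a ≤ i → i ≤ i' → i' < b → G i ≤ G i')
    (h1 : a ≤ tt) (h2 : tt ≤ b) (h0 : P0 ≤ 0)
    (hb : P0 + ∑ i ∈ Ico a b, G i ≤ 0) : P0 + ∑ i ∈ Ico a tt, G i ≤ 0 := by
  rcases eq_or_lt_of_le h2 with rfl | hlt
  · exact hb
  · rcases le_or_gt 0 (G tt) with hpos | hneg
    · have hsplit := wc_split G h1 (le_of_lt hlt)
      have hnn : 0 ≤ ∑ i ∈ Ico tt b, G i := by
        refine Finset.sum_nonneg fun i hi => ?_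
        rw [mem_Ico] at hi
        exact le_trans hpos (hmono tt i h1 hi.1 hi.2)
      linarith
    · have hnp : ∑ i ∈ Ico a tt, G i ≤ 0 := by
        refine Finset.sum_nonpos fun i hi => ?_
        rw [mem_Ico] at hi
        exact le_trans (hmono i tt hi.1 (le_of_lt hi.2) hlt) (le_of_lt hneg)
      linarith

lemma wc_div_le {N D m : ℝ} (hD : 0 < D) (h : N - m * D ≤ 0) : N / D ≤ m := by
  rw [div_le_iff₀ hD]; linarith

noncomputable def wcQ (n : ℕ → ℕ) (d : ℕ → ℤ) (α : ℕ → ℝ) (m : ℝ) (c i : ℕ) : ℝ :=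
  (d c : ℝ) + α i * (n c : ℝ) - m * (n c : ℝ)

lemma wc_expand (n : ℕ → ℕ) (d : ℕ → ℤ) (α : ℕ → ℝ) (m : ℝ) (s : Finset ℕ) :
    ∑ i ∈ s, wcQ n d α m i i
      = (∑ i ∈ s, ((d i:ℝ) + α i * n i)) - m * ∑ i ∈ s, (n i:ℝ) := by
  simp only [wcQ, Finset.sum_sub_distrib, Finset.mul_sum]

lemma wc_C2expand (n : ℕ → ℕ) (d : ℕ → ℤ) (α : ℕ → ℝ) (m : ℝ) (r a b : ℕ) (hab : a ≤ b) :
    ∑ i ∈ range (r+1) \ Icc a b, wcQ n d α m i i + ∑ i ∈ Icc a b, wcQ n d α m b i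
      = ((∑ i ∈ range (r+1) \ Icc a b, ((d i:ℝ) + α i * n i)) + ((b:ℝ)-a+1) * d b
          + (∑ i ∈ Icc a b, α i) * n b)
        - m * ((∑ i ∈ range (r+1) \ Icc a b, (n i:ℝ)) + ((b:ℝ)-a+1) * n b) := by
  have hcard : ((Icc a b).card : ℝ) = (b:ℝ) - a + 1 := by
    rw [Nat.card_Icc]
    have : a ≤ b + 1 := by omega
    push_cast [this]; ring
  have hblock : ∑ i ∈ Icc a b, wcQ n d α m b i
      = ((b:ℝ) - a + 1) * (d b:ℝ) + (∑ i ∈ Icc a b, α i) * (n b:ℝ)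
        - m * (((b:ℝ) - a + 1) * (n b:ℝ)) := by
    simp only [wcQ, Finset.sum_sub_distrib, Finset.sum_add_distrib, Finset.sum_const,
      ← Finset.sum_mul, nsmul_eq_mul, hcard]
    ring
  rw [hblock, wc_expand]
  ring

lemma wc_C3expand (n : ℕ → ℕ) (d : ℕ → ℤ) (α : ℕ → ℝ) (m : ℝ) (a b : ℕ) :
    ∑ i ∈ Icc (a+1) b, (wcQ n d α m i i - wcQ n d α m a i)
      = (∑ i ∈ Icc (a+1) b, ((d i:ℝ) - d a + α i * ((n i:ℝ) - n a)))
        - m * ∑ i ∈ Icc (a+1) b, ((n i:ℝ) - n a) := by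
  rw [Finset.mul_sum, ← Finset.sum_sub_distrib]
  refine Finset.sum_congr rfl fun i _ => ?_
  simp only [wcQ]; ring

lemma wc_cast_pos {s : Finset ℕ} {n : ℕ → ℕ} (h : 0 < ∑ i ∈ s, n i) :
    (0:ℝ) < ∑ i ∈ s, (n i : ℝ) := by
  have : ((∑ i ∈ s, n i : ℕ) : ℝ) = ∑ i ∈ s, (n i : ℝ) := by push_cast; ring
  rw [← this]; exact_mod_cast h

lemma wc_all_zero {s : Finset ℕ} {n : ℕ → ℕ} (h : ∑ i ∈ s, (n i:ℝ) ≤ 0) :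
    ∀ i ∈ s, n i = 0 := by
  intro i hi
  by_contra hne
  have : 0 < ∑ i ∈ s, n i :=
    Finset.sum_pos' (fun _ _ => Nat.zero_le _) ⟨i, hi, Nat.pos_of_ne_zero hne⟩
  exact absurd h (not_le.mpr (wc_cast_pos this))

lemma wc_le_div {N D m : ℝ} (hD : 0 < D) (h : N / D ≤ m) : N - m * D ≤ 0 := by
  rw [div_le_iff₀ hD] at h; linarith

lemma wc_tot (r : ℕ) (n : ℕ → ℕ) (d : ℕ → ℤ) (α : ℕ → ℝ)
    (hn : 0 < ∑ i ∈ range (r+1), n i) :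
    ∑ i ∈ range (r+1), wcQ n d α (mu r n d α) i i = 0 := by
  have hD := wc_cast_pos hn
  have hexp : ∑ i ∈ range (r+1), wcQ n d α (mu r n d α) i i
      = ((∑ i ∈ range (r+1), (d i:ℝ)) + ∑ i ∈ range (r+1), α i * (n i:ℝ))
        - mu r n d α * ∑ i ∈ range (r+1), (n i:ℝ) := by
    simp only [wcQ, Finset.sum_sub_distrib, Finset.sum_add_distrib, Finset.mul_sum]
  rw [hexp, mu, div_mul_cancel₀ _ (ne_of_gt hD), sub_self]

lemma wc_C1Q (r : ℕ) (n : ℕ → ℕ) (d : ℕ → ℤ) (α : ℕ → ℝ)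
    (hn : 0 < ∑ i ∈ range (r+1), n i)
    (hconv : ∀ i, i ≤ r → n i = 0 → d i = 0)
    (h1 : CondC1 r n d α) :
    ∀ m, m ≤ r + 1 → ∑ i ∈ range m, wcQ n d α (mu r n d α) i i ≤ 0 := by
  intro m hm
  rcases eq_or_lt_of_le hm with rfl | hlt
  · exact le_of_eq (wc_tot r n d α hn)
  rcases Nat.eq_zero_or_pos m with rfl | hmpos
  · simp
  obtain ⟨t, rfl⟩ : ∃ t, m = t + 1 := ⟨m-1, by omega⟩
  have htr : t < r := by omega
  rcases le_or_gt (∑ i ∈ range (t+1), (n i:ℝ)) 0 with hz | hpos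
  · refine le_of_eq (Finset.sum_eq_zero fun i hi => ?_)
    have hni : n i = 0 := wc_all_zero hz i hi
    have hdi : d i = 0 := hconv i (by rw [mem_range] at hi; omega) hni
    simp [wcQ, hni, hdi]
  · have h2 := wc_le_div hpos (h1 t htr hpos)
    have hexp : ∑ i ∈ range (t+1), wcQ n d α (mu r n d α) i i
        = (∑ i ∈ range (t+1), ((d i:ℝ) + α i * n i))
          - mu r n d α * ∑ i ∈ range (t+1), (n i:ℝ) := by
      simp only [wcQ, Finset.sum_sub_distrib, Finset.mul_sum]
    linarith

lemma wc_C2Q (r : ℕ) (n : ℕ → ℕ) (d : ℕ → ℤ) (α : ℕ → ℝ)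
    (hn : 0 < ∑ i ∈ range (r+1), n i)
    (hconv : ∀ i, i ≤ r → n i = 0 → d i = 0)
    (h2 : CondC2 r n d α) (a b : ℕ) (hab : a ≤ b) (hbr : b ≤ r)
    (hyp : ∀ i ∈ Icc a (b-1), n b < n i) :
    ∑ i ∈ range (r+1) \ Icc a b, wcQ n d α (mu r n d α) i i
      + ∑ i ∈ Icc a b, wcQ n d α (mu r n d α) b i ≤ 0 := by
  set μ := mu r n d α
  rcases eq_or_lt_of_le hab with rfl | hab'
  · have hsub : Icc a a ⊆ range (r+1) := by
      intro i hi; simp only [mem_Icc, mem_range] at *; omega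
    rw [Finset.sum_sdiff_eq_sub hsub]
    have : ∑ i ∈ Icc a a, wcQ n d α μ a i = ∑ i ∈ Icc a a, wcQ n d α μ i i := by
      rw [Finset.Icc_self]; simp
    rw [this]
    have := wc_tot r n d α hn
    simp only [μ] at *
    linarith
  · have hba : ((b:ℝ) - a + 1) > 0 := by
      have : (a:ℝ) < b := by exact_mod_cast hab'
      linarith
    have hcard : ((Icc a b).card : ℝ) = (b:ℝ) - a + 1 := by
      rw [Nat.card_Icc]
      have : a ≤ b + 1 := by omega
      push_cast [this]; ring
    have hblock : ∑ i ∈ Icc a b, wcQ n d α μ b i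
        = ((b:ℝ) - a + 1) * (d b:ℝ) + (∑ i ∈ Icc a b, α i) * (n b:ℝ)
          - μ * (((b:ℝ) - a + 1) * (n b:ℝ)) := by
      simp only [wcQ, Finset.sum_sub_distrib, Finset.sum_add_distrib, Finset.sum_const,
        ← Finset.sum_mul, nsmul_eq_mul, hcard]
      ring
    have hsd : ∑ i ∈ range (r+1) \ Icc a b, wcQ n d α μ i i
        = (∑ i ∈ range (r+1) \ Icc a b, ((d i:ℝ) + α i * n i))
          - μ * ∑ i ∈ range (r+1) \ Icc a b, (n i:ℝ) := by
      simp only [wcQ, Finset.sum_sub_distrib, Finset.mul_sum]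
    rcases le_or_gt ((∑ i ∈ range (r + 1) \ Icc a b, (n i : ℝ)) + ((b:ℝ) - (a:ℝ) + 1) * (n b:ℝ)) 0
      with hz | hpos
    · have hnnsd : (0:ℝ) ≤ ∑ i ∈ range (r + 1) \ Icc a b, (n i : ℝ) :=
        Finset.sum_nonneg fun i _ => Nat.cast_nonneg _
      have hnb0 : n b = 0 := by
        by_contra hne
        have h1 : (1:ℝ) ≤ (n b:ℝ) := by exact_mod_cast Nat.one_le_iff_ne_zero.mpr hne
        nlinarith
    
      have hsd0 : ∀ i ∈ range (r+1) \ Icc a b, n i = 0 := by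
        apply wc_all_zero
        nlinarith [hnnsd]
      have hdb : d b = 0 := hconv b hbr hnb0
      have e1 : ∑ i ∈ range (r+1) \ Icc a b, wcQ n d α μ i i = 0 := by
        refine Finset.sum_eq_zero fun i hi => ?_
        have hni := hsd0 i hi
        have hir : i ≤ r := by
          have := (Finset.mem_sdiff.mp hi).1; rw [mem_range] at this; omega
        simp [wcQ, hni, hconv i hir hni]
      have e2 : ∑ i ∈ Icc a b, wcQ n d α μ b i = 0 := by
        refine Finset.sum_eq_zero fun i _ => ?_
        simp [wcQ, hnb0, hdb]
      rw [e1, e2]; norm_num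
    · have := wc_le_div hpos (h2 a b hab' hbr hyp hpos)
      rw [hblock, hsd]
      linarith

lemma wc_C3denom (n : ℕ → ℕ) {a b : ℕ} (hab : a < b)
    (hyp : ∀ i ∈ Icc (a+1) b, n a < n i) :
    (0:ℝ) < ∑ i ∈ Icc (a+1) b, ((n i:ℝ) - n a) := by
  have hne : (Icc (a+1) b).Nonempty := by rw [Finset.nonempty_Icc]; omega
  calc (0:ℝ) < (Icc (a+1) b).card := by exact_mod_cast Finset.card_pos.mpr hne
    _ = ∑ i ∈ Icc (a+1) b, (1:ℝ) := by rw [Finset.sum_const, nsmul_eq_mul, mul_one]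
    _ ≤ _ := by
        refine Finset.sum_le_sum fun i hi => ?_
        have := hyp i hi
        have : (n a:ℝ) + 1 ≤ n i := by exact_mod_cast this
        linarith

lemma wc_C3Q (r : ℕ) (n : ℕ → ℕ) (d : ℕ → ℤ) (α : ℕ → ℝ)
    (h3 : CondC3 r n d α) (a b : ℕ) (hab : a ≤ b) (hbr : b ≤ r)
    (hyp : ∀ i ∈ Icc (a+1) b, n a < n i) :
    ∑ i ∈ Icc (a+1) b, (wcQ n d α (mu r n d α) i i - wcQ n d α (mu r n d α) a i) ≤ 0 := by
  set μ := mu r n d α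
  rcases eq_or_lt_of_le hab with rfl | hab'
  · rw [Finset.Icc_eq_empty (by omega)]; simp
  · have hD := wc_C3denom n hab' hyp
    have := wc_le_div hD (h3 a b hab' hbr hyp)
    have hexp : ∑ i ∈ Icc (a+1) b, (wcQ n d α μ i i - wcQ n d α μ a i)
        = (∑ i ∈ Icc (a+1) b, ((d i:ℝ) - d a + α i * ((n i:ℝ) - n a)))
          - μ * ∑ i ∈ Icc (a+1) b, ((n i:ℝ) - n a) := by
      rw [Finset.mul_sum, ← Finset.sum_sub_distrib]
      refine Finset.sum_congr rfl fun i _ => ?_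
      simp only [wcQ]; ring
    linarith

lemma wc_mono (r : ℕ) (α : ℕ → ℝ) (g : ℤ) (hg : 1 ≤ g)
    (h : ∀ i, 1 ≤ i → i ≤ r → α i - α (i-1) > 2*(g:ℝ) - 2) :
    ∀ i i', i ≤ i' → i' ≤ r → α i ≤ α i' := by
  have hg' : (0:ℝ) ≤ 2*(g:ℝ) - 2 := by
    have : (1:ℝ) ≤ g := by exact_mod_cast hg
    linarith
  intro i i'
  induction i' with
  | zero =>
      intro h1 _
      have : i = 0 := by omega
      rw [this]
  | succ m ih =>
      intro h1 h2
      rcases Nat.lt_or_ge i (m+1) with hlt | hge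
      · have step := h (m+1) (by omega) h2
        simp only [Nat.add_sub_cancel] at step
        have hi : α i ≤ α m := ih (by omega) (by omega)
        linarith
      · have : i = m + 1 := by omega
        rw [this]
/-- Wall-crossing lemma, wall of type (C3): if `α ∈ Stability_n^d(g)` lies on a wall
given by equality in (C3) at `(k, j)`, then the standard-quotient invariants
`(n'', d'')` and the complementary invariants `(n', d') = (n - n'', d - d'')` each
satisfy (C0), and `α` lies in their stability regions. -/
theorem wall_crossing_C3 (r : ℕ) (n : ℕ → ℕ) (d : ℕ → ℤ) (α : ℕ → ℝ) (g : ℤ)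
    (hg : 1 ≤ g)
    (hn : 0 < ∑ i ∈ range (r + 1), n i)
    (hC0 : CondC0 r n d)
    (hconv : ∀ i, i ≤ r → n i = 0 → d i = 0)
    (hα : α ∈ StabilityRegion r n d g)
    (k j : ℕ) (hkj : k < j) (hjr : j ≤ r)
    (hmin : ∀ i ∈ Icc (k + 1) j, n k < n i)
    (heq : (∑ i ∈ Icc (k + 1) j, ((d i : ℝ) - d k + α i * ((n i : ℝ) - n k))) /
        (∑ i ∈ Icc (k + 1) j, ((n i : ℝ) - n k)) = mu r n d α)
    (hn'' : 0 < ∑ i ∈ range (r + 1), (if k ≤ i ∧ i ≤ j then n k else n i)) :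
    CondC0 r (fun i => n i - (if k ≤ i ∧ i ≤ j then n k else n i))
        (fun i => d i - (if k ≤ i ∧ i ≤ j then d k else d i)) ∧
    CondC0 r (fun i => if k ≤ i ∧ i ≤ j then n k else n i)
        (fun i => if k ≤ i ∧ i ≤ j then d k else d i) ∧
    α ∈ StabilityRegion r (fun i => n i - (if k ≤ i ∧ i ≤ j then n k else n i))
        (fun i => d i - (if k ≤ i ∧ i ≤ j then d k else d i)) g ∧
    α ∈ StabilityRegion r (fun i => if k ≤ i ∧ i ≤ j then n k else n i)
        (fun i => if k ≤ i ∧ i ≤ j then d k else d i) g := by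
  obtain ⟨hα0, hstep, hc1, hc2, hc3⟩ := hα
  set n2 : ℕ → ℕ := fun i => if k ≤ i ∧ i ≤ j then n k else n i with hn2def
  set d2 : ℕ → ℤ := fun i => if k ≤ i ∧ i ≤ j then d k else d i with hd2def
  set n1 : ℕ → ℕ := fun i => n i - (if k ≤ i ∧ i ≤ j then n k else n i) with hn1def
  set d1 : ℕ → ℤ := fun i => d i - (if k ≤ i ∧ i ≤ j then d k else d i) with hd1def
  -- value lemmas
  have hn2in : ∀ i, k ≤ i → i ≤ j → n2 i = n k := by
    intro i h1 h2; simp only [hn2def]; rw [if_pos ⟨h1, h2⟩]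
  have hn2out : ∀ i, ¬(k ≤ i ∧ i ≤ j) → n2 i = n i := by
    intro i h; simp only [hn2def]; rw [if_neg h]
  have hd2in : ∀ i, k ≤ i → i ≤ j → d2 i = d k := by
    intro i h1 h2; simp only [hd2def]; rw [if_pos ⟨h1, h2⟩]
  have hd2out : ∀ i, ¬(k ≤ i ∧ i ≤ j) → d2 i = d i := by
    intro i h; simp only [hd2def]; rw [if_neg h]
  have hn2le : ∀ i, n2 i ≤ n i := by
    intro i
    by_cases h : k ≤ i ∧ i ≤ j
    · rw [hn2in i h.1 h.2]
      rcases eq_or_lt_of_le h.1 with rfl | hlt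
      · exact le_refl _
      · exact le_of_lt (hmin i (by rw [mem_Icc]; omega))
    · rw [hn2out i h]
  have hn1e : ∀ i, n1 i = n i - n2 i := fun i => rfl
  have hd1e : ∀ i, d1 i = d i - d2 i := fun i => rfl
  have hn1c : ∀ i, (n1 i:ℝ) = (n i:ℝ) - n2 i := by
    intro i; rw [hn1e, Nat.cast_sub (hn2le i)]
  have hd1c : ∀ i, (d1 i:ℝ) = (d i:ℝ) - d2 i := by
    intro i; rw [hd1e]; push_cast; ring
  have hn1z : ∀ i, i ≤ k ∨ j < i → n1 i = 0 := by
    intro i hi; rw [hn1e]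
    by_cases hb : k ≤ i ∧ i ≤ j
    · have hik : i = k := by omega
      subst hik; rw [hn2in i le_rfl (le_of_lt hkj)]; omega
    · rw [hn2out i hb]; omega
  have hd1z : ∀ i, i ≤ k ∨ j < i → d1 i = 0 := by
    intro i hi; rw [hd1e]
    by_cases hb : k ≤ i ∧ i ≤ j
    · have hik : i = k := by omega
      subst hik; rw [hd2in i le_rfl (le_of_lt hkj)]; omega
    · rw [hd2out i hb]; omega
  have hn1in : ∀ i, k < i → i ≤ j → (n1 i:ℝ) = (n i:ℝ) - n k := by
    intro i h1 h2; rw [hn1c, hn2in i (le_of_lt h1) h2]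
  have hd1in : ∀ i, k < i → i ≤ j → (d1 i:ℝ) = (d i:ℝ) - d k := by
    intro i h1 h2; rw [hd1c, hd2in i (le_of_lt h1) h2]
  -- wcQ value lemmas
  have hQ2cin : ∀ c, k ≤ c → c ≤ j → ∀ i, wcQ n2 d2 α (mu r n d α) c i = wcQ n d α (mu r n d α) k i := by
    intro c h1 h2 i; simp only [wcQ, hn2in c h1 h2, hd2in c h1 h2]
  have hQ2cout : ∀ c, ¬(k ≤ c ∧ c ≤ j) → ∀ i, wcQ n2 d2 α (mu r n d α) c i = wcQ n d α (mu r n d α) c i := by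
    intro c h i; simp only [wcQ, hn2out c h, hd2out c h]
  have hQ1z : ∀ c, c ≤ k ∨ j < c → ∀ i, wcQ n1 d1 α (mu r n d α) c i = 0 := by
    intro c h i; simp only [wcQ, hn1z c h, hd1z c h]; norm_num
  have hQ1cin : ∀ c, k < c → c ≤ j → ∀ i,
      wcQ n1 d1 α (mu r n d α) c i = wcQ n d α (mu r n d α) c i - wcQ n d α (mu r n d α) k i := by
    intro c h1 h2 i; simp only [wcQ]; rw [hn1in c h1 h2, hd1in c h1 h2]; ring
  -- base facts
  have hmono := wc_mono r α g hg hstep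
  have htot := wc_tot r n d α hn
  have hC1 := wc_C1Q r n d α hn hconv hc1
  have hC2 := wc_C2Q r n d α hn hconv hc2
  have hC3 := wc_C3Q r n d α hc3
  have hDppos : 0 < ∑ i ∈ Icc (k+1) j, ((n i:ℝ) - n k) := wc_C3denom n hkj hmin
  have hwall : ∑ i ∈ Icc (k+1) j,
      (wcQ n d α (mu r n d α) i i - wcQ n d α (mu r n d α) k i) = 0 := by
    rw [div_eq_iff (ne_of_gt hDppos)] at heq
    rw [wc_C3expand, heq]; ring
  have hwall0 : ∑ i ∈ Icc k j,
      (wcQ n d α (mu r n d α) i i - wcQ n d α (mu r n d α) k i) = 0 := by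
    rw [wc_Icc_bot _ (le_of_lt hkj), hwall]; ring
  have hsubr : Icc k j ⊆ range (r+1) := by
    intro i hi; rw [mem_Icc] at hi; rw [mem_range]; omega
  have hQ2sub : ∀ s : Finset ℕ, Icc k j ⊆ s →
      ∑ i ∈ s, wcQ n2 d2 α (mu r n d α) i i = ∑ i ∈ s, wcQ n d α (mu r n d α) i i := by
    intro s hs
    have e1 : ∑ i ∈ s, wcQ n2 d2 α (mu r n d α) i i - ∑ i ∈ s, wcQ n d α (mu r n d α) i i
        = ∑ i ∈ s, (wcQ n2 d2 α (mu r n d α) i i - wcQ n d α (mu r n d α) i i) :=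
      (Finset.sum_sub_distrib _ _).symm
    have e2 : ∑ i ∈ s, (wcQ n2 d2 α (mu r n d α) i i - wcQ n d α (mu r n d α) i i)
        = ∑ i ∈ Icc k j, (wcQ n2 d2 α (mu r n d α) i i - wcQ n d α (mu r n d α) i i) := by
      refine (Finset.sum_subset hs fun i _ hni => ?_).symm
      rw [mem_Icc] at hni
      rw [hQ2cout i (by omega) i]; ring
    have e3 : ∑ i ∈ Icc k j, (wcQ n2 d2 α (mu r n d α) i i - wcQ n d α (mu r n d α) i i)
        = -∑ i ∈ Icc k j, (wcQ n d α (mu r n d α) i i - wcQ n d α (mu r n d α) k i) := by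
      rw [← Finset.sum_neg_distrib]
      refine Finset.sum_congr rfl fun i hi => ?_
      rw [mem_Icc] at hi
      rw [hQ2cin i hi.1 hi.2 i]; ring
    rw [e2, e3, hwall0] at e1
    linarith
  have htot1 : ∑ i ∈ range (r+1), wcQ n1 d1 α (mu r n d α) i i = 0 := by
    rw [wc_blocksum _ (show k+1 ≤ j by omega) hjr
      (fun i hir hi => hQ1z i (by omega) i)]
    have e : ∑ i ∈ Icc (k+1) j, wcQ n1 d1 α (mu r n d α) i i
        = ∑ i ∈ Icc (k+1) j, (wcQ n d α (mu r n d α) i i - wcQ n d α (mu r n d α) k i) := by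
      refine Finset.sum_congr rfl fun i hi => ?_
      rw [mem_Icc] at hi
      exact hQ1cin i (by omega) hi.2 i
    rw [e]; exact hwall
  have htot2 : ∑ i ∈ range (r+1), wcQ n2 d2 α (mu r n d α) i i = 0 := by
    rw [hQ2sub (range (r+1)) hsubr]; exact htot
  have hD1 : ∑ i ∈ range (r+1), (n1 i : ℝ) = ∑ i ∈ Icc (k+1) j, ((n i:ℝ) - n k) := by
    rw [wc_blocksum _ (show k+1 ≤ j by omega) hjr
      (fun i hir hi => by rw [hn1z i (by omega)]; norm_num)]
    exact Finset.sum_congr rfl fun i hi => by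
      rw [mem_Icc] at hi; exact hn1in i (by omega) hi.2
  have hD1pos : 0 < ∑ i ∈ range (r+1), (n1 i : ℝ) := by rw [hD1]; exact hDppos
  have hD2pos : 0 < ∑ i ∈ range (r+1), (n2 i : ℝ) := wc_cast_pos hn''
  have hμ1 : mu r n1 d1 α = mu r n d α := by
    have e := wc_expand n1 d1 α (mu r n d α) (range (r+1))
    rw [htot1] at e
    rw [mu, div_eq_iff (ne_of_gt hD1pos)]
    have e2 : ∑ i ∈ range (r+1), ((d1 i:ℝ) + α i * n1 i)
        = (∑ i ∈ range (r+1), (d1 i:ℝ)) + ∑ i ∈ range (r+1), α i * (n1 i:ℝ) :=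
      Finset.sum_add_distrib
    linarith
  have hμ2 : mu r n2 d2 α = mu r n d α := by
    have e := wc_expand n2 d2 α (mu r n d α) (range (r+1))
    rw [htot2] at e
    rw [mu, div_eq_iff (ne_of_gt hD2pos)]
    have e2 : ∑ i ∈ range (r+1), ((d2 i:ℝ) + α i * n2 i)
        = (∑ i ∈ range (r+1), (d2 i:ℝ)) + ∑ i ∈ range (r+1), α i * (n2 i:ℝ) :=
      Finset.sum_add_distrib
    linarith
  -- the eight key statements
  have hC0p : CondC0 r n1 d1 := by
    intro i h1 hir hne
    by_cases hi : k < i ∧ i ≤ j <;> by_cases hi1 : k < i - 1 ∧ i - 1 ≤ j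
    · have e1 : n1 i = n i - n k := by rw [hn1e, hn2in i (by omega) hi.2]
      have e2 : n1 (i-1) = n (i-1) - n k := by rw [hn1e, hn2in (i-1) (by omega) hi1.2]
      have g1 : n k < n i := hmin i (by rw [mem_Icc]; omega)
      have g2 : n k < n (i-1) := hmin (i-1) (by rw [mem_Icc]; omega)
      have hnn : n i = n (i-1) := by omega
      have hd := hC0 i h1 hir hnn
      rw [hd1e, hd1e, hd2in i (by omega) hi.2, hd2in (i-1) (by omega) hi1.2]
      omega
    · exfalso
      have e1 : n1 i = n i - n k := by rw [hn1e, hn2in i (by omega) hi.2]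
      have e2 : n1 (i-1) = 0 := hn1z (i-1) (by omega)
      have g1 : n k < n i := hmin i (by rw [mem_Icc]; omega)
      omega
    · exfalso
      have e1 : n1 i = 0 := hn1z i (by omega)
      have e2 : n1 (i-1) = n (i-1) - n k := by rw [hn1e, hn2in (i-1) (by omega) hi1.2]
      have g2 : n k < n (i-1) := hmin (i-1) (by rw [mem_Icc]; omega)
      omega
    · rw [hd1z i (by omega), hd1z (i-1) (by omega)]
  have hC0pp : CondC0 r n2 d2 := by
    intro i h1 hir hne
    by_cases hi : k ≤ i ∧ i ≤ j <;> by_cases hi1 : k ≤ i - 1 ∧ i - 1 ≤ j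
    · rw [hd2in i hi.1 hi.2, hd2in (i-1) hi1.1 hi1.2]
    · have hik : i = k := by omega
      subst hik
      rw [hd2in i le_rfl (by omega), hd2out (i-1) (by omega)]
      rw [hn2in i le_rfl (by omega), hn2out (i-1) (by omega)] at hne
      exact hC0 i h1 hir hne
    · -- i = j + 1 : the hard case
      have hij : i = j + 1 := by omega
      subst hij
      simp only [Nat.add_sub_cancel] at hne hi1 ⊢
      rw [hn2out (j+1) (by omega), hn2in j hi1.1 hi1.2] at hne
      rw [hd2out (j+1) (by omega), hd2in j hi1.1 hi1.2]
      -- goal : d (j+1) ≤ d k, knowing hne : n (j+1) = n k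
      have hE2 := hC2 (k+1) (j+1) (by omega) (by omega) (by
        intro i hi2
        simp only [Nat.add_sub_cancel] at hi2
        rw [hne]
        exact hmin i hi2)
      have hsub2 : Icc (k+1) (j+1) ⊆ range (r+1) := by
        intro i hi2; rw [mem_Icc] at hi2; rw [mem_range]; omega
      have hsd : ∑ i ∈ range (r+1) \ Icc (k+1) (j+1), wcQ n d α (mu r n d α) i i
          = ∑ i ∈ range (r+1), wcQ n d α (mu r n d α) i i
            - ∑ i ∈ Icc (k+1) (j+1), wcQ n d α (mu r n d α) i i :=
        Finset.sum_sdiff_eq_sub hsub2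
      have hsplit : ∀ F : ℕ → ℝ, ∑ i ∈ Icc (k+1) (j+1), F i = ∑ i ∈ Icc (k+1) j, F i + F (j+1) := by
        intro F
        rw [← Finset.Ico_add_one_right_eq_Icc, Finset.sum_Ico_succ_top (by omega), Finset.Ico_add_one_right_eq_Icc]
      rw [hsd, htot, hsplit, hsplit] at hE2
      have hQjj : wcQ n d α (mu r n d α) (j+1) (j+1) = wcQ n d α (mu r n d α) (j+1) (j+1) := rfl
      have hwall' : ∑ i ∈ Icc (k+1) j, wcQ n d α (mu r n d α) i i
          - ∑ i ∈ Icc (k+1) j, wcQ n d α (mu r n d α) k i = 0 := by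
        rw [← Finset.sum_sub_distrib]; exact hwall
      have hAcongr : ∑ i ∈ Icc (k+1) j, wcQ n d α (mu r n d α) (j+1) i
          - ∑ i ∈ Icc (k+1) j, wcQ n d α (mu r n d α) k i
          = ∑ i ∈ Icc (k+1) j, ((d (j+1) : ℝ) - (d k : ℝ)) := by
        rw [← Finset.sum_sub_distrib]
        refine Finset.sum_congr rfl fun i _ => ?_
        simp only [wcQ]
        rw [hne]
        ring
      have hcardpos : (0:ℝ) < ((Icc (k+1) j).card : ℝ) := by
        have : (Icc (k+1) j).Nonempty := by rw [Finset.nonempty_Icc]; omega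
        exact_mod_cast Finset.card_pos.mpr this
      rw [Finset.sum_const, nsmul_eq_mul] at hAcongr
      have hfinal : (d (j+1) : ℝ) - (d k : ℝ) ≤ 0 := by
        by_contra hcon
        push_neg at hcon
        have h2 := mul_pos hcardpos hcon
        linarith
      have : (d (j+1) : ℝ) ≤ (d k : ℝ) := by linarith
      exact_mod_cast this
    · rw [hd2out i hi, hd2out (i-1) hi1]
      rw [hn2out i hi, hn2out (i-1) hi1] at hne
      exact hC0 i h1 hir hne
  have hC1p : CondC1 r n1 d1 α := by
    intro tt httr hpos
    rw [hμ1]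
    apply wc_div_le hpos
    rw [← wc_expand n1 d1 α (mu r n d α) (range (tt+1))]
    rcases le_or_gt (tt+1) (k+1) with hc | hc
    · refine le_of_eq (Finset.sum_eq_zero fun i hi => ?_)
      rw [mem_range] at hi
      exact hQ1z i (by omega) i
    rcases le_or_gt j tt with hcj | hcj
    · rw [wc_blocksum _ (show k+1 ≤ j by omega) (show j ≤ tt by omega)
        (fun i hir2 hi => hQ1z i (by omega) i)]
      have e2 : ∑ i ∈ Icc (k+1) j, wcQ n1 d1 α (mu r n d α) i i
          = ∑ i ∈ Icc (k+1) j, (wcQ n d α (mu r n d α) i i - wcQ n d α (mu r n d α) k i) :=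
        Finset.sum_congr rfl fun i hi => by rw [mem_Icc] at hi; exact hQ1cin i (by omega) hi.2 i
      rw [e2, hwall]
    · rw [wc_blocksum _ (show k+1 ≤ tt by omega) (le_refl tt)
        (fun i hir2 hi => hQ1z i (by omega) i)]
      have e2 : ∑ i ∈ Icc (k+1) tt, wcQ n1 d1 α (mu r n d α) i i
          = ∑ i ∈ Icc (k+1) tt, (wcQ n d α (mu r n d α) i i - wcQ n d α (mu r n d α) k i) :=
        Finset.sum_congr rfl fun i hi => by rw [mem_Icc] at hi; exact hQ1cin i (by omega) (by omega) i
      rw [e2]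
      exact hC3 k tt (by omega) (by omega) (fun i hi => hmin i (by rw [mem_Icc] at *; omega))
  have hC2p : CondC2 r n1 d1 α := by
    intro a b hab hbr2 hyp hpos
    rw [hμ1]
    apply wc_div_le hpos
    rw [← wc_C2expand n1 d1 α (mu r n d α) r a b (le_of_lt hab)]
    by_cases hbin : k < b ∧ b ≤ j
    · -- block-interior quotient case
      have hbpos : 0 < n1 b := by
        have e2 : n1 b = n b - n k := by rw [hn1e, hn2in b (by omega) hbin.2]
        have := hmin b (by rw [mem_Icc]; omega)
        omega
      have hain : k < a := by
        have h3 := hyp a (by rw [mem_Icc]; omega)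
        by_contra hcon
        have : n1 a = 0 := hn1z a (by omega)
        omega
      have hsubab : Icc a b ⊆ range (r+1) := by
        intro i hi; rw [mem_Icc] at hi; rw [mem_range]; omega
      have hE2 := hC2 a b (le_of_lt hab) hbr2 (by
        intro i hi
        rw [mem_Icc] at hi
        have h3 := hyp i (by rw [mem_Icc]; omega)
        have e1 : n1 b = n b - n k := by rw [hn1e, hn2in b (by omega) hbin.2]
        have e2 : n1 i = n i - n k := by rw [hn1e, hn2in i (by omega) (by omega)]
        have g1 : n k < n b := hmin b (by rw [mem_Icc]; omega)
        omega)
      have hsdf := Finset.sum_sdiff_eq_sub (f := fun i => wcQ n d α (mu r n d α) i i) hsubab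
      have hsdf1 := Finset.sum_sdiff_eq_sub (f := fun i => wcQ n1 d1 α (mu r n d α) i i) hsubab
      have ebl : ∑ i ∈ Icc a b, wcQ n1 d1 α (mu r n d α) b i
          = ∑ i ∈ Icc a b, (wcQ n d α (mu r n d α) b i - wcQ n d α (mu r n d α) k i) :=
        Finset.sum_congr rfl fun i _ => hQ1cin b hbin.1 hbin.2 i
      have eff : ∑ i ∈ Icc a b, wcQ n1 d1 α (mu r n d α) i i
          = ∑ i ∈ Icc a b, (wcQ n d α (mu r n d α) i i - wcQ n d α (mu r n d α) k i) :=
        Finset.sum_congr rfl fun i hi => by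
          rw [mem_Icc] at hi
          exact hQ1cin i (by omega) (by omega) i
      simp only [Finset.sum_sub_distrib] at ebl eff
      rw [hsdf1, htot1, eff, ebl]
      rw [hsdf, htot] at hE2
      linarith
    · -- quotient rank vanishes : forces b = j+1
      have hb0 : n1 b = 0 := hn1z b (by omega)
      have hain : ∀ i, a ≤ i → i ≤ b-1 → (k < i ∧ i ≤ j) := by
        intro i h1 h2
        have h3 := hyp i (by rw [mem_Icc]; omega)
        by_contra hcon
        have : n1 i = 0 := hn1z i (by omega)
        omega
      have hical : k < a ∧ b = j+1 := by
        have h1 := hain a le_rfl (by omega)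
        have h2 := hain (b-1) (by omega) le_rfl
        omega
      obtain ⟨hka, hbj⟩ := hical
      subst hbj
      have ebl : ∑ i ∈ Icc a (j+1), wcQ n1 d1 α (mu r n d α) (j+1) i = 0 :=
        Finset.sum_eq_zero fun i _ => hQ1z (j+1) (by omega) i
      rw [wc_sdiff _ (by omega : a ≤ j+1) hbr2, ebl]
      have ez : ∑ i ∈ Ico (j+1+1) (r+1), wcQ n1 d1 α (mu r n d α) i i = 0 :=
        Finset.sum_eq_zero fun i hi => by
          rw [mem_Ico] at hi
          exact hQ1z i (by omega) i
      rw [ez, wc_split _ (Nat.zero_le (k+1)) (show k+1 ≤ a by omega)]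
      have ez2 : ∑ i ∈ Ico 0 (k+1), wcQ n1 d1 α (mu r n d α) i i = 0 :=
        Finset.sum_eq_zero fun i hi => by
          rw [mem_Ico] at hi
          exact hQ1z i (by omega) i
      rw [ez2]
      have e2 : ∑ i ∈ Ico (k+1) a, wcQ n1 d1 α (mu r n d α) i i
          = ∑ i ∈ Icc (k+1) (a-1), (wcQ n d α (mu r n d α) i i - wcQ n d α (mu r n d α) k i) := by
        have hset : Ico (k+1) a = Icc (k+1) (a-1) := by
          ext x; simp only [mem_Ico, mem_Icc]; omega
        rw [hset]
        refine Finset.sum_congr rfl fun i hi => ?_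
        rw [mem_Icc] at hi
        exact hQ1cin i (by omega) (by omega) i
      rw [e2]
      have := hC3 k (a-1) (by omega) (by omega) (fun i hi => hmin i (by rw [mem_Icc] at *; omega))
      linarith
  have hC3p : CondC3 r n1 d1 α := by
    intro a b hab hbr2 hyp
    rw [hμ1]
    apply wc_div_le (wc_C3denom n1 hab hyp)
    rw [← wc_C3expand n1 d1 α (mu r n d α) a b]
    have hblk : ∀ i, a < i → i ≤ b → (k < i ∧ i ≤ j) := by
      intro i hi1 hi2
      have h3 := hyp i (by rw [mem_Icc]; omega)
      by_contra hcon
      have : n1 i = 0 := hn1z i (by omega)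
      omega
    have hramin : k ≤ a ∧ b ≤ j := by
      have h1 := hblk (a+1) (by omega) hab
      have h2 := hblk b (by omega) le_rfl
      omega
    by_cases hain : k < a ∧ a ≤ j
    · have e : ∀ i ∈ Icc (a+1) b,
          wcQ n1 d1 α (mu r n d α) i i - wcQ n1 d1 α (mu r n d α) a i
            = wcQ n d α (mu r n d α) i i - wcQ n d α (mu r n d α) a i := by
        intro i hi
        rw [mem_Icc] at hi
        rw [hQ1cin i (hblk i (by omega) hi.2).1 (hblk i (by omega) hi.2).2 i,
          hQ1cin a hain.1 hain.2 i]
        ring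
      rw [Finset.sum_congr rfl e]
      apply hC3 a b (le_of_lt hab) hbr2
      intro i hi
      rw [mem_Icc] at hi
      have h3 := hyp i (by rw [mem_Icc]; omega)
      have e1 : n1 a = n a - n k := by rw [hn1e, hn2in a (by omega) hain.2]
      have e2 : n1 i = n i - n k := by
        rw [hn1e, hn2in i (by omega) (hblk i (by omega) hi.2).2]
      have g1 : n k < n a := hmin a (by rw [mem_Icc]; omega)
      omega
    · have hak : a = k := by omega
      subst hak
      have e : ∀ i ∈ Icc (a+1) b,
          wcQ n1 d1 α (mu r n d α) i i - wcQ n1 d1 α (mu r n d α) a i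
            = wcQ n d α (mu r n d α) i i - wcQ n d α (mu r n d α) a i := by
        intro i hi
        rw [mem_Icc] at hi
        rw [hQ1cin i (by omega) (hblk i (by omega) hi.2).2 i, hQ1z a (Or.inl le_rfl) i]
        ring
      rw [Finset.sum_congr rfl e]
      exact hC3 a b (le_of_lt hab) hbr2 (fun i hi => hmin i (by rw [mem_Icc] at *; omega))
  have hIcokj : Ico k (j+1) = Icc k j := by
    ext x; simp only [mem_Ico, mem_Icc]; omega
  have hIcokj1 : Ico (k+1) (j+1) = Icc (k+1) j := by
    ext x; simp only [mem_Ico, mem_Icc]; omega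
  have hqmono : ∀ c, n c ≤ n k → ∀ i i', i ≤ i' → i' ≤ r →
      wcQ n d α (mu r n d α) k i - wcQ n d α (mu r n d α) c i
        ≤ wcQ n d α (mu r n d α) k i' - wcQ n d α (mu r n d α) c i' := by
    intro c hc i i' h1 h2
    have hα' := hmono i i' h1 h2
    have hc' : (n c:ℝ) ≤ (n k:ℝ) := by exact_mod_cast hc
    have := mul_le_mul_of_nonneg_right hα' (by linarith : (0:ℝ) ≤ (n k:ℝ) - n c)
    simp only [wcQ]
    nlinarith
  have hC1pp : CondC1 r n2 d2 α := by
    intro tt httr hpos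
    rw [hμ2]
    apply wc_div_le hpos
    rw [← wc_expand n2 d2 α (mu r n d α) (range (tt+1))]
    rcases le_or_gt (tt+1) k with hc | hc
    · have e : ∑ i ∈ range (tt+1), wcQ n2 d2 α (mu r n d α) i i
          = ∑ i ∈ range (tt+1), wcQ n d α (mu r n d α) i i :=
        Finset.sum_congr rfl fun i hi => by
          rw [mem_range] at hi
          exact hQ2cout i (by omega) i
      rw [e]
      exact hC1 (tt+1) (by omega)
    rcases le_or_gt (j+1) (tt+1) with hcj | hcj
    · rw [hQ2sub (range (tt+1)) (by
        intro i hi; rw [mem_Icc] at hi; rw [mem_range]; omega)]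
      exact hC1 (tt+1) (by omega)
    · -- k ≤ tt < j : interpolation
      rw [wc_split_range _ (show k ≤ tt+1 by omega)]
      have e0 : ∑ i ∈ range k, wcQ n2 d2 α (mu r n d α) i i
          = ∑ i ∈ range k, wcQ n d α (mu r n d α) i i :=
        Finset.sum_congr rfl fun i hi => by
          rw [mem_range] at hi
          exact hQ2cout i (by omega) i
      have e1 : ∑ i ∈ Ico k (tt+1), wcQ n2 d2 α (mu r n d α) i i
          = ∑ i ∈ Ico k (tt+1), wcQ n d α (mu r n d α) k i :=
        Finset.sum_congr rfl fun i hi => by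
          rw [mem_Ico] at hi
          exact hQ2cin i hi.1 (by omega) i
      rw [e0, e1]
      refine wc_trick _ k (j+1) (tt+1) _ ?_ (by omega) (by omega) ?_ ?_
      · intro i i' h1 h2 h3
        have hα' := hmono i i' h2 (by omega)
        have := mul_le_mul_of_nonneg_right hα' (Nat.cast_nonneg (n k))
        simp only [wcQ]
        linarith
      · exact hC1 k (by omega)
      · have h' : ∑ i ∈ Ico k (j+1), wcQ n d α (mu r n d α) i i
            - ∑ i ∈ Ico k (j+1), (wcQ n d α (mu r n d α) i i - wcQ n d α (mu r n d α) k i)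
            = ∑ i ∈ Ico k (j+1), wcQ n d α (mu r n d α) k i := by
          rw [← Finset.sum_sub_distrib]
          exact Finset.sum_congr rfl fun i _ => by ring
        have hw : ∑ i ∈ Ico k (j+1),
            (wcQ n d α (mu r n d α) i i - wcQ n d α (mu r n d α) k i) = 0 := by
          rw [hIcokj]; exact hwall0
        have hs2 := wc_split_range (fun i => wcQ n d α (mu r n d α) i i) (show k ≤ j+1 by omega)
        have h6 := hC1 (j+1) (by omega)
        linarith
  have hC2pp : CondC2 r n2 d2 α := by
    intro a b hab hbr2 hyp hpos
    rw [hμ2]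
    apply wc_div_le hpos
    rw [← wc_C2expand n2 d2 α (mu r n d α) r a b (le_of_lt hab)]
    by_cases hpure : b < k ∨ j < a
    · -- [a,b] disjoint from the block
      have e1 := hQ2sub (range (r+1) \ Icc a b) (by
        intro i hi
        rw [mem_Icc] at hi
        simp only [mem_sdiff, mem_range, mem_Icc]
        omega)
      have e2 : ∑ i ∈ Icc a b, wcQ n2 d2 α (mu r n d α) b i
          = ∑ i ∈ Icc a b, wcQ n d α (mu r n d α) b i :=
        Finset.sum_congr rfl fun i _ => hQ2cout b (by omega) i
      rw [e1, e2]
      refine hC2 a b (le_of_lt hab) hbr2 fun i hi => ?_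
      have h3 := hyp i hi
      rw [mem_Icc] at hi
      rw [hn2out b (by omega), hn2out i (by omega)] at h3
      exact h3
    rcases le_or_gt b j with hbj | hbj
    · -- k ≤ b ≤ j : forces b = k
      have hbk : b = k := by
        by_contra hne
        have hkb : k < b := by omega
        rcases le_or_gt a k with h | h
        · have h3 := hyp k (by rw [mem_Icc]; omega)
          rw [hn2in b (by omega) (by omega), hn2in k le_rfl (by omega)] at h3
          omega
        · have h3 := hyp a (by rw [mem_Icc]; omega)
          rw [hn2in b (by omega) (by omega), hn2in a (by omega) (by omega)] at h3
          omega
      subst hbk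
      rw [wc_sdiff _ (le_of_lt hab) (show b ≤ r by omega),
        wc_split _ (show b+1 ≤ j+1 by omega) (show j+1 ≤ r+1 by omega)]
      have ea : ∑ i ∈ Ico 0 a, wcQ n2 d2 α (mu r n d α) i i
          = ∑ i ∈ Ico 0 a, wcQ n d α (mu r n d α) i i :=
        Finset.sum_congr rfl fun i hi => by
          rw [mem_Ico] at hi; exact hQ2cout i (by omega) i
      have eb : ∑ i ∈ Ico (b+1) (j+1), wcQ n2 d2 α (mu r n d α) i i
          = ∑ i ∈ Ico (b+1) (j+1), wcQ n d α (mu r n d α) b i :=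
        Finset.sum_congr rfl fun i hi => by
          rw [mem_Ico] at hi; exact hQ2cin i (by omega) (by omega) i
      have ec : ∑ i ∈ Ico (j+1) (r+1), wcQ n2 d2 α (mu r n d α) i i
          = ∑ i ∈ Ico (j+1) (r+1), wcQ n d α (mu r n d α) i i :=
        Finset.sum_congr rfl fun i hi => by
          rw [mem_Ico] at hi; exact hQ2cout i (by omega) i
      have ed : ∑ i ∈ Icc a b, wcQ n2 d2 α (mu r n d α) b i
          = ∑ i ∈ Icc a b, wcQ n d α (mu r n d α) b i :=
        Finset.sum_congr rfl fun i _ => hQ2cin b le_rfl (by omega) i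
      rw [ea, eb, ec, ed]
      have E2 := hC2 a b (le_of_lt hab) (by omega) (by
        intro i hi
        have h3 := hyp i hi
        rw [mem_Icc] at hi
        rw [hn2in b le_rfl (by omega), hn2out i (by omega)] at h3
        exact h3)
      rw [wc_sdiff _ (le_of_lt hab) (by omega),
        wc_split _ (show b+1 ≤ j+1 by omega) (show j+1 ≤ r+1 by omega)] at E2
      have hw : ∑ i ∈ Ico (b+1) (j+1),
          (wcQ n d α (mu r n d α) i i - wcQ n d α (mu r n d α) b i) = 0 := by
        rw [hIcokj1]; exact hwall
      rw [Finset.sum_sub_distrib] at hw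
      linarith
    rcases lt_or_ge a k with hak | hak
    · -- a < k ≤ j < b : the block sits inside [a,b]
      have e1 : ∑ i ∈ range (r+1) \ Icc a b, wcQ n2 d2 α (mu r n d α) i i
          = ∑ i ∈ range (r+1) \ Icc a b, wcQ n d α (mu r n d α) i i :=
        Finset.sum_congr rfl fun i hi => by
          simp only [mem_sdiff, mem_range, mem_Icc] at hi
          exact hQ2cout i (by omega) i
      have e2 : ∑ i ∈ Icc a b, wcQ n2 d2 α (mu r n d α) b i
          = ∑ i ∈ Icc a b, wcQ n d α (mu r n d α) b i :=
        Finset.sum_congr rfl fun i _ => hQ2cout b (by omega) i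
      rw [e1, e2]
      have hnbk : n b < n k := by
        have h3 := hyp k (by rw [mem_Icc]; omega)
        rw [hn2out b (by omega), hn2in k le_rfl (by omega)] at h3
        exact h3
      refine hC2 a b (le_of_lt hab) hbr2 fun i hi => ?_
      have h3 := hyp i hi
      rw [mem_Icc] at hi
      by_cases hin : k ≤ i ∧ i ≤ j
      · rcases eq_or_lt_of_le hin.1 with rfl | hlt
        · exact hnbk
        · exact lt_trans hnbk (hmin i (by rw [mem_Icc]; omega))
      · rw [hn2out b (by omega), hn2out i hin] at h3
        exact h3
    · -- k ≤ a ≤ j < b : interpolation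
      have hnbk : n b < n k := by
        have h3 := hyp a (by rw [mem_Icc]; omega)
        rw [hn2out b (by omega), hn2in a hak (by omega)] at h3
        exact h3
      rw [wc_sdiff _ (le_of_lt hab) hbr2,
        wc_split (fun i => wcQ n2 d2 α (mu r n d α) i i) (Nat.zero_le k) (show k ≤ a by omega)]
      have ea : ∑ i ∈ Ico 0 k, wcQ n2 d2 α (mu r n d α) i i
          = ∑ i ∈ Ico 0 k, wcQ n d α (mu r n d α) i i :=
        Finset.sum_congr rfl fun i hi => by
          rw [mem_Ico] at hi; exact hQ2cout i (by omega) i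
      have eb : ∑ i ∈ Ico k a, wcQ n2 d2 α (mu r n d α) i i
          = ∑ i ∈ Ico k a, wcQ n d α (mu r n d α) k i :=
        Finset.sum_congr rfl fun i hi => by
          rw [mem_Ico] at hi; exact hQ2cin i hi.1 (by omega) i
      have ec : ∑ i ∈ Ico (b+1) (r+1), wcQ n2 d2 α (mu r n d α) i i
          = ∑ i ∈ Ico (b+1) (r+1), wcQ n d α (mu r n d α) i i :=
        Finset.sum_congr rfl fun i hi => by
          rw [mem_Ico] at hi; exact hQ2cout i (by omega) i
      have ed : ∑ i ∈ Icc a b, wcQ n2 d2 α (mu r n d α) b i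
          = ∑ i ∈ Icc a b, wcQ n d α (mu r n d α) b i :=
        Finset.sum_congr rfl fun i _ => hQ2cout b (by omega) i
      rw [ea, eb, ec, ed]
      -- trick with G s = wcQ k s - wcQ b s on [k, j+1], evaluated at a
      have h0 : ∑ i ∈ Ico 0 k, wcQ n d α (mu r n d α) i i
          + ∑ i ∈ Ico (b+1) (r+1), wcQ n d α (mu r n d α) i i
          + ∑ i ∈ Icc k b, wcQ n d α (mu r n d α) b i ≤ 0 := by
        have E2k := hC2 k b (by omega) hbr2 (by
          intro i hi
          rw [mem_Icc] at hi
          rcases eq_or_lt_of_le hi.1 with rfl | hlt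
          · exact hnbk
          · rcases le_or_gt i j with h7 | h7
            · exact lt_trans hnbk (hmin i (by rw [mem_Icc]; omega))
            · have h3 := hyp i (by rw [mem_Icc]; omega)
              rw [hn2out b (by omega), hn2out i (by omega)] at h3
              exact h3)
        rw [wc_sdiff _ (by omega) hbr2] at E2k
        linarith
      have hbnd : (∑ i ∈ Ico 0 k, wcQ n d α (mu r n d α) i i
          + ∑ i ∈ Ico (b+1) (r+1), wcQ n d α (mu r n d α) i i
          + ∑ i ∈ Icc k b, wcQ n d α (mu r n d α) b i)
          + ∑ i ∈ Ico k (j+1), (wcQ n d α (mu r n d α) k i - wcQ n d α (mu r n d α) b i) ≤ 0 := by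
        have E2j := hC2 (j+1) b (by omega) hbr2 (by
          intro i hi
          rw [mem_Icc] at hi
          have h3 := hyp i (by rw [mem_Icc]; omega)
          rw [hn2out b (by omega), hn2out i (by omega)] at h3
          exact h3)
        rw [wc_sdiff _ (by omega) hbr2] at E2j
        have s1 := wc_split (fun i => wcQ n d α (mu r n d α) i i) (Nat.zero_le k) (show k ≤ j+1 by omega)
        have s2 : ∑ i ∈ Icc k b, wcQ n d α (mu r n d α) b i
            = ∑ i ∈ Ico k (j+1), wcQ n d α (mu r n d α) b i
              + ∑ i ∈ Icc (j+1) b, wcQ n d α (mu r n d α) b i := by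
          rw [← Finset.Ico_add_one_right_eq_Icc, ← Finset.Ico_add_one_right_eq_Icc]
          exact wc_split _ (by omega) (by omega)
        have s3 : ∑ i ∈ Ico k (j+1),
            (wcQ n d α (mu r n d α) k i - wcQ n d α (mu r n d α) b i)
            = ∑ i ∈ Ico k (j+1), wcQ n d α (mu r n d α) k i
              - ∑ i ∈ Ico k (j+1), wcQ n d α (mu r n d α) b i :=
          Finset.sum_sub_distrib _ _
        have hw0 : ∑ i ∈ Ico k (j+1),
            (wcQ n d α (mu r n d α) i i - wcQ n d α (mu r n d α) k i) = 0 := by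
          rw [hIcokj]; exact hwall0
        rw [Finset.sum_sub_distrib] at hw0
        linarith
      have htr := wc_trick (fun s => wcQ n d α (mu r n d α) k s - wcQ n d α (mu r n d α) b s)
        k (j+1) a _
        (fun i i' h1 h2 h3 => hqmono b (le_of_lt hnbk) i i' h2 (by omega))
        (by omega) (by omega) h0 hbnd
      have t1 : ∑ i ∈ Ico k a,
          (wcQ n d α (mu r n d α) k i - wcQ n d α (mu r n d α) b i)
          = ∑ i ∈ Ico k a, wcQ n d α (mu r n d α) k i
            - ∑ i ∈ Ico k a, wcQ n d α (mu r n d α) b i :=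
        Finset.sum_sub_distrib _ _
      have t2 : ∑ i ∈ Icc k b, wcQ n d α (mu r n d α) b i
          = ∑ i ∈ Ico k a, wcQ n d α (mu r n d α) b i
            + ∑ i ∈ Icc a b, wcQ n d α (mu r n d α) b i := by
        rw [← Finset.Ico_add_one_right_eq_Icc, ← Finset.Ico_add_one_right_eq_Icc]
        exact wc_split _ (by omega) (by omega)
      rw [t1, t2] at htr
      linarith
  have hC3pp : CondC3 r n2 d2 α := by
    intro a b hab hbr2 hyp
    rw [hμ2]
    apply wc_div_le (wc_C3denom n2 hab hyp)
    rw [← wc_C3expand n2 d2 α (mu r n d α) a b]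
    by_cases hain : k ≤ a ∧ a ≤ j
    · -- a in the block : forces a = j
      have haj : a = j := by
        by_contra hne
        have h3 := hyp (a+1) (by rw [mem_Icc]; omega)
        rw [hn2in a hain.1 hain.2, hn2in (a+1) (by omega) (by omega)] at h3
        omega
      have e : ∀ i ∈ Icc (a+1) b,
          wcQ n2 d2 α (mu r n d α) i i - wcQ n2 d2 α (mu r n d α) a i
            = wcQ n d α (mu r n d α) i i - wcQ n d α (mu r n d α) k i := by
        intro i hi
        rw [mem_Icc] at hi
        rw [hQ2cout i (by omega) i, hQ2cin a hain.1 hain.2 i]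
      rw [Finset.sum_congr rfl e, haj]
      have hsplit : ∀ F : ℕ → ℝ,
          ∑ i ∈ Icc (k+1) b, F i = ∑ i ∈ Icc (k+1) j, F i + ∑ i ∈ Icc (j+1) b, F i := by
        intro F
        rw [← Finset.Ico_add_one_right_eq_Icc, ← Finset.Ico_add_one_right_eq_Icc, ← Finset.Ico_add_one_right_eq_Icc]
        exact wc_split F (by omega) (by omega)
      have h4 := hC3 k b (by omega) hbr2 (by
        intro i hi
        rw [mem_Icc] at hi
        rcases le_or_gt i j with hij | hij
        · exact hmin i (by rw [mem_Icc]; omega)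
        · have h3 := hyp i (by rw [mem_Icc]; omega)
          rw [hn2in a hain.1 hain.2, hn2out i (by omega)] at h3
          exact h3)
      rw [hsplit _] at h4
      linarith [hwall]
    · by_cases hpure : j < a ∨ b < k
      · -- [a,b] disjoint from the block
        have e : ∀ i ∈ Icc (a+1) b,
            wcQ n2 d2 α (mu r n d α) i i - wcQ n2 d2 α (mu r n d α) a i
              = wcQ n d α (mu r n d α) i i - wcQ n d α (mu r n d α) a i := by
          intro i hi
          rw [mem_Icc] at hi
          rw [hQ2cout i (by omega) i, hQ2cout a (by omega) i]
        rw [Finset.sum_congr rfl e]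
        refine hC3 a b (le_of_lt hab) hbr2 (fun i hi => ?_)
        have h3 := hyp i hi
        rw [mem_Icc] at hi
        rw [hn2out a (by omega), hn2out i (by omega)] at h3
        exact h3
      · -- a < k ≤ b
        have hak : a < k := by omega
        have hkb : k ≤ b := by omega
        have hnak : n a < n k := by
          have h3 := hyp k (by rw [mem_Icc]; omega)
          rw [hn2out a (by omega), hn2in k le_rfl (by omega)] at h3
          exact h3
        rcases le_or_gt b j with hbj | hbj
        · -- a < k ≤ b ≤ j : interpolation
          have esplit : ∑ i ∈ Icc (a+1) b,
              (wcQ n2 d2 α (mu r n d α) i i - wcQ n2 d2 α (mu r n d α) a i)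
              = ∑ i ∈ Ico (a+1) k,
                  (wcQ n2 d2 α (mu r n d α) i i - wcQ n2 d2 α (mu r n d α) a i)
                + ∑ i ∈ Ico k (b+1),
                  (wcQ n2 d2 α (mu r n d α) i i - wcQ n2 d2 α (mu r n d α) a i) := by
            rw [← Finset.Ico_add_one_right_eq_Icc]
            exact wc_split _ (by omega) (by omega)
          have e1 : ∑ i ∈ Ico (a+1) k,
              (wcQ n2 d2 α (mu r n d α) i i - wcQ n2 d2 α (mu r n d α) a i)
              = ∑ i ∈ Ico (a+1) k,
                  (wcQ n d α (mu r n d α) i i - wcQ n d α (mu r n d α) a i) := by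
            refine Finset.sum_congr rfl fun i hi => ?_
            rw [mem_Ico] at hi
            rw [hQ2cout i (by omega) i, hQ2cout a (by omega) i]
          have e2 : ∑ i ∈ Ico k (b+1),
              (wcQ n2 d2 α (mu r n d α) i i - wcQ n2 d2 α (mu r n d α) a i)
              = ∑ i ∈ Ico k (b+1),
                  (wcQ n d α (mu r n d α) k i - wcQ n d α (mu r n d α) a i) := by
            refine Finset.sum_congr rfl fun i hi => ?_
            rw [mem_Ico] at hi
            rw [hQ2cin i hi.1 (by omega) i, hQ2cout a (by omega) i]
          rw [esplit, e1, e2]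
          have hP0 : ∑ i ∈ Ico (a+1) k,
              (wcQ n d α (mu r n d α) i i - wcQ n d α (mu r n d α) a i) ≤ 0 := by
            have hset : Ico (a+1) k = Icc (a+1) (k-1) := by
              ext x; simp only [mem_Ico, mem_Icc]; omega
            rw [hset]
            refine hC3 a (k-1) (by omega) (by omega) (fun i hi => ?_)
            rw [mem_Icc] at hi
            have h3 := hyp i (by rw [mem_Icc]; omega)
            rw [hn2out a (by omega), hn2out i (by omega)] at h3
            exact h3
          refine wc_trick _ k (j+1) (b+1) _ ?_ (by omega) (by omega) hP0 ?_
          · intro i i' h1 h2 h3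
            exact hqmono a (le_of_lt hnak) i i' h2 (by omega)
          · -- value at the right end : the (a, j) subchain
            have h5 := hC3 a j (by omega) (by omega) (by
              intro i hi
              rw [mem_Icc] at hi
              rcases lt_trichotomy i k with h6 | h6 | h6
              · have h3 := hyp i (by rw [mem_Icc]; omega)
                rw [hn2out a (by omega), hn2out i (by omega)] at h3
                exact h3
              · subst h6; exact hnak
              · exact lt_trans hnak (hmin i (by rw [mem_Icc]; omega)))
            have hs5 : ∑ i ∈ Icc (a+1) j,
                (wcQ n d α (mu r n d α) i i - wcQ n d α (mu r n d α) a i)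
                = ∑ i ∈ Ico (a+1) k,
                    (wcQ n d α (mu r n d α) i i - wcQ n d α (mu r n d α) a i)
                  + ∑ i ∈ Ico k (j+1),
                    (wcQ n d α (mu r n d α) i i - wcQ n d α (mu r n d α) a i) := by
              rw [← Finset.Ico_add_one_right_eq_Icc]
              exact wc_split _ (by omega) (by omega)
            have e6 : ∑ i ∈ Ico k (j+1),
                (wcQ n d α (mu r n d α) k i - wcQ n d α (mu r n d α) a i)
                = ∑ i ∈ Ico k (j+1),
                    (wcQ n d α (mu r n d α) i i - wcQ n d α (mu r n d α) a i)
                  - ∑ i ∈ Ico k (j+1),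
                    (wcQ n d α (mu r n d α) i i - wcQ n d α (mu r n d α) k i) := by
              rw [← Finset.sum_sub_distrib]
              exact Finset.sum_congr rfl fun i _ => by ring
            have hw : ∑ i ∈ Ico k (j+1),
                (wcQ n d α (mu r n d α) i i - wcQ n d α (mu r n d α) k i) = 0 := by
              rw [hIcokj]; exact hwall0
            rw [hs5] at h5
            rw [e6, hw]
            linarith
        · -- a < k, j < b : the block is inside (a, b]
          have hsubab : Icc k j ⊆ Icc (a+1) b := by
            intro i hi; rw [mem_Icc] at *; omega
          have e7 : ∑ i ∈ Icc (a+1) b,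
              ((wcQ n2 d2 α (mu r n d α) i i - wcQ n2 d2 α (mu r n d α) a i)
                - (wcQ n d α (mu r n d α) i i - wcQ n d α (mu r n d α) a i))
              = ∑ i ∈ Icc k j,
                  ((wcQ n2 d2 α (mu r n d α) i i - wcQ n2 d2 α (mu r n d α) a i)
                    - (wcQ n d α (mu r n d α) i i - wcQ n d α (mu r n d α) a i)) := by
            refine (Finset.sum_subset hsubab fun i _ hni => ?_).symm
            rw [mem_Icc] at hni
            rw [hQ2cout i (by omega) i, hQ2cout a (by omega) i]
            ring
          have e8 : ∑ i ∈ Icc k j,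
              ((wcQ n2 d2 α (mu r n d α) i i - wcQ n2 d2 α (mu r n d α) a i)
                - (wcQ n d α (mu r n d α) i i - wcQ n d α (mu r n d α) a i))
              = -∑ i ∈ Icc k j,
                  (wcQ n d α (mu r n d α) i i - wcQ n d α (mu r n d α) k i) := by
            rw [← Finset.sum_neg_distrib]
            refine Finset.sum_congr rfl fun i hi => ?_
            rw [mem_Icc] at hi
            rw [hQ2cin i hi.1 hi.2 i, hQ2cout a (by omega) i]
            ring
          have h9 := hC3 a b (le_of_lt hab) hbr2 (by
            intro i hi
            rw [mem_Icc] at hi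
            rcases lt_trichotomy i k with h6 | h6 | h6
            · have h3 := hyp i (by rw [mem_Icc]; omega)
              rw [hn2out a (by omega), hn2out i (by omega)] at h3
              exact h3
            · subst h6; exact hnak
            · rcases le_or_gt i j with h7 | h7
              · exact lt_trans hnak (hmin i (by rw [mem_Icc]; omega))
              · have h3 := hyp i (by rw [mem_Icc]; omega)
                rw [hn2out a (by omega), hn2out i (by omega)] at h3
                exact h3)
          have e9 : ∑ i ∈ Icc (a+1) b,
              ((wcQ n2 d2 α (mu r n d α) i i - wcQ n2 d2 α (mu r n d α) a i)
                - (wcQ n d α (mu r n d α) i i - wcQ n d α (mu r n d α) a i))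
              = ∑ i ∈ Icc (a+1) b,
                  (wcQ n2 d2 α (mu r n d α) i i - wcQ n2 d2 α (mu r n d α) a i)
                - ∑ i ∈ Icc (a+1) b,
                  (wcQ n d α (mu r n d α) i i - wcQ n d α (mu r n d α) a i) :=
            Finset.sum_sub_distrib _ _
          rw [e7, e8, hwall0] at e9
          linarith
  exact ⟨hC0p, hC0pp, ⟨hα0, hstep, hC1p, hC2p, hC3p⟩, ⟨hα0, hstep, hC1pp, hC2pp, hC3pp⟩⟩
end

section
/- (Stability interval for triples.) Let n_0, n_1 ≥ 1 be natural numbers with n_0 ≠ n_1, d_0, d_1 ∈ ℤ, and α ∈ ℝ. Set α_min := d_0/n_0 − d_1/n_1 and α_max := (1 + (n_0 + n_1)/|n_0 − n_1|)·(d_0/n_0 − d_1/n_1). Then the following are equivalent: (i) d_0/n_0 ≤ μ_α(n, d) and, if n_1 < n_0, (2·d_1 + α·n_1)/(2·n_1) ≤ μ_α(n, d), while if n_0 < n_1, (d_1 − d_0 + α·(n_1 − n_0))/(n_1 − n_0) ≤ μ_α(n, d); (ii) α_min ≤ α ≤ α_max. Moreover, if n_0 = n_1 then condition (i) reduces to d_0/n_0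 ≤ μ_α(n, d), which holds if and only if α ≥ α_min. -/
/-- Stability interval for triples: for `n_0 ≠ n_1` the conditions (C1)–(C3) hold
iff `α_min ≤ α ≤ α_max`; for `n_0 = n_1` condition (C1) alone applies and holds iff
`α ≥ α_min`. Here `α_min = d_0/n_0 − d_1/n_1` and
`α_max = (1 + (n_0+n_1)/|n_0−n_1|)·(d_0/n_0 − d_1/n_1)`. -/
theorem triple_stability_interval (n0 n1 : ℕ) (h0 : 1 ≤ n0) (h1 : 1 ≤ n1)
    (d0 d1 : ℤ) (α : ℝ) :
    (n0 ≠ n1 →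
      (((d0 : ℝ) / n0 ≤ ((d0 : ℝ) + d1 + α * n1) / ((n0 : ℝ) + n1) ∧
          (n1 < n0 →
            (2 * (d1 : ℝ) + α * n1) / (2 * (n1 : ℝ)) ≤
              ((d0 : ℝ) + d1 + α * n1) / ((n0 : ℝ) + n1)) ∧
          (n0 < n1 →
            ((d1 : ℝ) - d0 + α * ((n1 : ℝ) - n0)) / ((n1 : ℝ) - n0) ≤
              ((d0 : ℝ) + d1 + α * n1) / ((n0 : ℝ) + n1))) ↔
        ((d0 : ℝ) / n0 - (d1 : ℝ) / n1 ≤ α ∧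
          α ≤ (1 + ((n0 : ℝ) + n1) / |(n0 : ℝ) - n1|) *
            ((d0 : ℝ) / n0 - (d1 : ℝ) / n1)))) ∧
    (n0 = n1 →
      ((d0 : ℝ) / n0 ≤ ((d0 : ℝ) + d1 + α * n1) / ((n0 : ℝ) + n1) ↔
        (d0 : ℝ) / n0 - (d1 : ℝ) / n1 ≤ α)) := by
  have ha : (0:ℝ) < (n0:ℝ) := Nat.cast_pos.mpr h0
  have hb : (0:ℝ) < (n1:ℝ) := Nat.cast_pos.mpr h1
  have ha' : (n0:ℝ) ≠ 0 := ne_of_gt ha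
  have hb' : (n1:ℝ) ≠ 0 := ne_of_gt hb
  have hC1 : ((d0 : ℝ) / n0 ≤ ((d0 : ℝ) + d1 + α * n1) / ((n0 : ℝ) + n1)) ↔
      ((d0 : ℝ) / n0 - (d1 : ℝ) / n1 ≤ α) := by
    rw [div_le_div_iff₀ ha (by linarith),
      show (d0:ℝ)/n0 - (d1:ℝ)/n1 = ((d0:ℝ)*n1 - d1*n0)/((n0:ℝ)*n1) by field_simp,
      div_le_iff₀ (by positivity)]
    constructor <;> intro h <;> nlinarith
  refine ⟨fun hne => ?_, fun heq => ?_⟩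
  · rcases hne.lt_or_gt with hlt | hlt
    · -- n0 < n1
      have hba : (n0:ℝ) < n1 := Nat.cast_lt.mpr hlt
      have habs : |(n0:ℝ) - n1| = (n1:ℝ) - n0 := by
        rw [abs_of_neg (by linarith)]; ring
      have hC3 : (((d1 : ℝ) - d0 + α * ((n1 : ℝ) - n0)) / ((n1 : ℝ) - n0) ≤
            ((d0 : ℝ) + d1 + α * n1) / ((n0 : ℝ) + n1)) ↔
          (α ≤ (1 + ((n0 : ℝ) + n1) / ((n1:ℝ) - n0)) * ((d0 : ℝ) / n0 - (d1 : ℝ) / n1)) := by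
        rw [div_le_div_iff₀ (by linarith) (by linarith),
          show (1 + ((n0 : ℝ) + n1) / ((n1:ℝ) - n0)) * ((d0 : ℝ) / n0 - (d1 : ℝ) / n1)
            = (2*((d0:ℝ)*n1 - d1*n0))/((n0:ℝ)*((n1:ℝ) - n0)) by
              have hd : (n1:ℝ) - n0 ≠ 0 := ne_of_gt (by linarith)
              field_simp
              ring,
          le_div_iff₀ (by nlinarith)]
        constructor <;> intro h <;> nlinarith
      rw [habs]
      constructor
      · rintro ⟨h1, _, h3⟩
        exact ⟨hC1.mp h1, hC3.mp (h3 hlt)⟩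
      · rintro ⟨h1, h2⟩
        exact ⟨hC1.mpr h1, fun hc => absurd hc (by omega), fun _ => hC3.mpr h2⟩
    · -- n1 < n0
      have hba : (n1:ℝ) < n0 := Nat.cast_lt.mpr hlt
      have habs : |(n0:ℝ) - n1| = (n0:ℝ) - n1 := abs_of_pos (by linarith)
      have hC2 : ((2 * (d1 : ℝ) + α * n1) / (2 * (n1 : ℝ)) ≤
            ((d0 : ℝ) + d1 + α * n1) / ((n0 : ℝ) + n1)) ↔
          (α ≤ (1 + ((n0 : ℝ) + n1) / ((n0:ℝ) - n1)) * ((d0 : ℝ) / n0 - (d1 : ℝ) / n1)) := by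
        rw [div_le_div_iff₀ (by positivity) (by linarith),
          show (1 + ((n0 : ℝ) + n1) / ((n0:ℝ) - n1)) * ((d0 : ℝ) / n0 - (d1 : ℝ) / n1)
            = (2*((d0:ℝ)*n1 - d1*n0))/((n1:ℝ)*((n0:ℝ) - n1)) by
              have hd : (n0:ℝ) - n1 ≠ 0 := ne_of_gt (by linarith)
              field_simp
              ring,
          le_div_iff₀ (by nlinarith)]
        constructor <;> intro h <;> nlinarith
      rw [habs]
      constructor
      · rintro ⟨h1, h2, _⟩
        exact ⟨hC1.mp h1, hC2.mp (h2 hlt)⟩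
      · rintro ⟨h1, h2⟩
        exact ⟨hC1.mpr h1, fun _ => hC2.mpr h2, fun hc => absurd hc (by omega)⟩
  · exact hC1
end
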